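/- arXiv:0804.3386 — 9 statements merged into one kernel-verified Lean document; each statement's English description precedes it below -/
import Mathlib

section
/- Any two countable graphs satisfying the extension property are isomorphic. -/
def ExtProp (G : SimpleGraph ℕ) : Prop :=
  ∀ U W : Finset ℕ, Disjoint U W →
    ∃ v : ℕ, v ∉ U ∧ v ∉ W ∧ (∀ u ∈ U, G.Adj v u) ∧ (∀ w ∈ W, ¬ G.Adj v w)

attribute [local instance] Classical.propDecidable

/-- A finite partial isomorphism, represented as a list of pairs. -/
def Good (G G' : SimpleGraph ℕ) (l : List (ℕ × ℕ)) : Prop :=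
  ∀ p ∈ l, ∀ q ∈ l, (p.1 = q.1 ↔ p.2 = q.2) ∧ (G.Adj p.1 q.1 ↔ G'.Adj p.2 q.2)

lemma good_flip {G G' : SimpleGraph ℕ} {l : List (ℕ × ℕ)} (h : Good G G' l) :
    Good G' G (l.map Prod.swap) := by
  intro p hp q hq
  simp only [List.mem_map] at hp hq
  obtain ⟨p', hp', rfl⟩ := hp
  obtain ⟨q', hq', rfl⟩ := hq
  obtain ⟨h1, h2⟩ := h p' hp' q' hq'
  exact ⟨h1.symm, h2.symm⟩

lemma good_forth (G G' : SimpleGraph ℕ) (hG' : ExtProp G') {l : List (ℕ × ℕ)}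
    (hl : Good G G' l) (a : ℕ) : ∃ b, Good G G' ((a, b) :: l) := by
  by_cases hmem : ∃ p ∈ l, p.1 = a
  · obtain ⟨p, hp, rfl⟩ := hmem
    refine ⟨p.2, ?_⟩
    have : ∀ q ∈ ((p.1, p.2) :: l), q ∈ l := by
      intro q hq
      rcases List.mem_cons.1 hq with h | h
      · simpa [h]
      · exact h
    intro x hx y hy
    exact hl x (this x hx) y (this y hy)
  · push_neg at hmem
    set U : Finset ℕ := (l.toFinset.filter (fun p => G.Adj a p.1)).image Prod.snd with hU
    set W : Finset ℕ := (l.toFinset.filter (fun p => ¬ G.Adj a p.1)).image Prod.snd with hW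
    have hdisj : Disjoint U W := by
      rw [Finset.disjoint_left]
      intro b hbU hbW
      simp only [hU, hW, Finset.mem_image, Finset.mem_filter, List.mem_toFinset] at hbU hbW
      obtain ⟨p, ⟨hp, hpa⟩, hpb⟩ := hbU
      obtain ⟨q, ⟨hq, hqa⟩, hqb⟩ := hbW
      have := (hl p hp q hq).1.2 (hpb.trans hqb.symm)
      exact hqa (this ▸ hpa)
    obtain ⟨v, hvU, hvW, hvadj, hvnadj⟩ := hG' U W hdisj
    refine ⟨v, ?_⟩
    -- key facts about pairing v with members of l
    have key : ∀ q ∈ l, (a = q.1 ↔ v = q.2) ∧ (G.Adj a q.1 ↔ G'.Adj v q.2) := by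
      intro q hq
      have hqUW : q.2 ∈ U ∪ W := by
        by_cases hadj : G.Adj a q.1
        · exact Finset.mem_union_left _ (Finset.mem_image.2 ⟨q, Finset.mem_filter.2 ⟨List.mem_toFinset.2 hq, hadj⟩, rfl⟩)
        · exact Finset.mem_union_right _ (Finset.mem_image.2 ⟨q, Finset.mem_filter.2 ⟨List.mem_toFinset.2 hq, hadj⟩, rfl⟩)
      have hvne : v ≠ q.2 := by
        rintro rfl
        rcases Finset.mem_union.1 hqUW with h | h
        · exact hvU h
        · exact hvW h
      have hane : a ≠ q.1 := fun h => hmem q hq h.symm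
      constructor
      · exact iff_of_false hane hvne
      · constructor
        · intro hadj
          exact hvadj q.2 (Finset.mem_image.2 ⟨q, Finset.mem_filter.2 ⟨List.mem_toFinset.2 hq, hadj⟩, rfl⟩)
        · intro hadj
          by_contra hnadj
          exact hvnadj q.2 (Finset.mem_image.2 ⟨q, Finset.mem_filter.2 ⟨List.mem_toFinset.2 hq, hnadj⟩, rfl⟩) hadj
    intro p hp q hq
    rcases List.mem_cons.1 hp with rfl | hp' <;> rcases List.mem_cons.1 hq with h | hq'
    · subst h; simp
    · exact key q hq'
    · rcases h with rfl
      obtain ⟨h1, h2⟩ := key p hp'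
      exact ⟨⟨fun h => (h1.1 h.symm).symm, fun h => (h1.2 h.symm).symm⟩,
        ⟨fun h => (h2.1 h.symm).symm, fun h => (h2.2 h.symm).symm⟩⟩
    · exact hl p hp' q hq'

lemma good_back (G G' : SimpleGraph ℕ) (hG : ExtProp G) {l : List (ℕ × ℕ)}
    (hl : Good G G' l) (b : ℕ) : ∃ a, Good G G' ((a, b) :: l) := by
  obtain ⟨a, ha⟩ := good_forth G' G hG (good_flip hl) b
  refine ⟨a, ?_⟩
  have := good_flip ha
  simpa [Prod.swap, List.map_map, Function.comp] using this

noncomputable def step (G G' : SimpleGraph ℕ) (hG : ExtProp G) (hG' : ExtProp G')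
    (l : List (ℕ × ℕ)) (n : ℕ) : List (ℕ × ℕ) :=
  if h : Good G G' l then
    if n % 2 = 0 then
      ((n / 2, (good_forth G G' hG' h (n / 2)).choose)) :: l
    else
      (((good_back G G' hG h (n / 2)).choose, n / 2)) :: l
  else l

noncomputable def L (G G' : SimpleGraph ℕ) (hG : ExtProp G) (hG' : ExtProp G') : ℕ → List (ℕ × ℕ)
  | 0 => []
  | n + 1 => step G G' hG hG' (L G G' hG hG' n) n

lemma goodL (G G' : SimpleGraph ℕ) (hG : ExtProp G) (hG' : ExtProp G') (n : ℕ) :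
    Good G G' (L G G' hG hG' n) := by
  induction n with
  | zero => intro p hp; simp [L] at hp
  | succ n ih =>
    show Good G G' (step G G' hG hG' (L G G' hG hG' n) n)
    rw [step, dif_pos ih]
    split
    · exact (good_forth G G' hG' ih (n / 2)).choose_spec
    · exact (good_back G G' hG ih (n / 2)).choose_spec

lemma L_mono (G G' : SimpleGraph ℕ) (hG : ExtProp G) (hG' : ExtProp G') {m n : ℕ}
    (h : m ≤ n) : ∀ p ∈ L G G' hG hG' m, p ∈ L G G' hG hG' n := by
  induction n with
  | zero =>
    intro p hp
    have : m = 0 := Nat.le_zero.1 h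
    subst this; exact hp
  | succ n ih =>
    intro p hp
    rcases Nat.lt_or_ge m (n+1) with h' | h'
    · have hp' := ih (by omega) p hp
      show p ∈ step G G' hG hG' (L G G' hG hG' n) n
      rw [step]
      split
      · split <;> exact List.mem_cons_of_mem _ hp'
      · exact hp'
    · have : m = n + 1 := le_antisymm h h'
      subst this; exact hp

lemma mem_fst (G G' : SimpleGraph ℕ) (hG : ExtProp G) (hG' : ExtProp G') (n : ℕ)
    (hn : n % 2 = 0) : ∃ b, (n / 2, b) ∈ L G G' hG hG' (n + 1) := by
  have hg := goodL G G' hG hG' n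
  refine ⟨(good_forth G G' hG' hg (n / 2)).choose, ?_⟩
  show _ ∈ step G G' hG hG' (L G G' hG hG' n) n
  rw [step, dif_pos hg, if_pos hn]
  exact List.mem_cons_self

lemma mem_snd (G G' : SimpleGraph ℕ) (hG : ExtProp G) (hG' : ExtProp G') (n : ℕ)
    (hn : ¬ n % 2 = 0) : ∃ a, (a, n / 2) ∈ L G G' hG hG' (n + 1) := by
  have hg := goodL G G' hG hG' n
  refine ⟨(good_back G G' hG hg (n / 2)).choose, ?_⟩
  show _ ∈ step G G' hG hG' (L G G' hG hG' n) n
  rw [step, dif_pos hg, if_neg hn]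
  exact List.mem_cons_self

theorem extension_unique_up_to_iso (G G' : SimpleGraph ℕ)
    (hG : ExtProp G) (hG' : ExtProp G') : Nonempty (G ≃g G') := by
  set R : ℕ → ℕ → Prop := fun a b => ∃ n, (a, b) ∈ L G G' hG hG' n with hR
  have hRgood : ∀ {a b a' b'}, R a b → R a' b' →
      (a = a' ↔ b = b') ∧ (G.Adj a a' ↔ G'.Adj b b') := by
    rintro a b a' b' ⟨n, hn⟩ ⟨m, hm⟩
    have h1 := L_mono G G' hG hG' (le_max_left n m) _ hn
    have h2 := L_mono G G' hG hG' (le_max_right n m) _ hm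
    exact goodL G G' hG hG' (max n m) _ h1 _ h2
  have hRtot : ∀ a, ∃ b, R a b := fun a => by
    obtain ⟨b, hb⟩ := mem_fst G G' hG hG' (2 * a) (by omega)
    have h2 : 2 * a / 2 = a := by omega
    rw [h2] at hb
    exact ⟨b, _, hb⟩
  have hRcotot : ∀ b, ∃ a, R a b := fun b => by
    obtain ⟨a, ha⟩ := mem_snd G G' hG hG' (2 * b + 1) (by omega)
    have h2 : (2 * b + 1) / 2 = b := by omega
    rw [h2] at ha
    exact ⟨a, _, ha⟩
  set F : ℕ → ℕ := fun a => (hRtot a).choose with hF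
  set Finv : ℕ → ℕ := fun b => (hRcotot b).choose with hFinv
  have hFspec : ∀ a, R a (F a) := fun a => (hRtot a).choose_spec
  have hFinvspec : ∀ b, R (Finv b) b := fun b => (hRcotot b).choose_spec
  have hleft : Function.LeftInverse Finv F := by
    intro a
    exact ((hRgood (hFinvspec (F a)) (hFspec a)).1.2 rfl).symm ▸ rfl
  have hright : Function.RightInverse Finv F := by
    intro b
    exact (hRgood (hFspec (Finv b)) (hFinvspec b)).1.1 rfl
  refine ⟨⟨⟨F, Finv, hleft, hright⟩, ?_⟩⟩
  intro a b
  exact ((hRgood (hFspec a) (hFspec b)).2).symm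
end

section
/- There is no universal K₄-free graph structure on ℤ that is shift-invariant. More precisely: there is no symmetric set Z ⊆ ℤ \ {0} such that the graph on ℤ with edges {(x,y) : x − y ∈ Z} is K₄-free and satisfies the K₄-free extension property (for any disjoint finite sets U, W with U triangle-free in the induced graph, some vertex is joined to all of U and none of W). -/
/-- There is no shift-invariant universal K₄-free graph structure on ℤ. -/
theorem no_shift_invariant_universal_K4_free_on_int :
    ¬ ∃ Z : Set ℤ, (∀ z ∈ Z, -z ∈ Z) ∧ (0 : ℤ) ∉ Z ∧
      -- K₄-free
      (¬ ∃ a b c d : ℤ, a - b ∈ Z ∧ a - c ∈ Z ∧ a - d ∈ Z ∧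
        b - c ∈ Z ∧ b - d ∈ Z ∧ c - d ∈ Z) ∧
      -- K₄-free extension property
      (∀ U W : Finset ℤ, Disjoint U W →
        (¬ ∃ a ∈ U, ∃ b ∈ U, ∃ c ∈ U, a - b ∈ Z ∧ a - c ∈ Z ∧ b - c ∈ Z) →
        ∃ v : ℤ, v ∉ U ∧ v ∉ W ∧ (∀ u ∈ U, v - u ∈ Z) ∧ (∀ w ∈ W, v - w ∉ Z)) := by
  rintro ⟨Z, hsym, h0, hK4, hext⟩
  -- a singleton is triangle-free
  have singlefree : ∀ x : ℤ, ¬ ∃ a ∈ ({x} : Finset ℤ), ∃ b ∈ ({x} : Finset ℤ),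
      ∃ c ∈ ({x} : Finset ℤ), a - b ∈ Z ∧ a - c ∈ Z ∧ b - c ∈ Z := by
    rintro x ⟨a, ha, b, hb, c, hc, h1, -, -⟩
    simp only [Finset.mem_singleton] at ha hb
    subst ha; subst hb
    exact h0 (by simpa using h1)
  -- Step 1: Z is nonempty
  obtain ⟨z, -, -, hz', -⟩ := hext {0} ∅ (Finset.disjoint_empty_right _) (singlefree 0)
  have hz : z ∈ Z := by simpa using hz' 0 (Finset.mem_singleton_self 0)
  have hz0 : z ≠ 0 := fun h => h0 (h ▸ hz)
  -- Step 2: find s ∈ Z with s - z ∉ Z and s + z ∉ Z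
  have hdisj : Disjoint ({0} : Finset ℤ) ({z, -z} : Finset ℤ) := by
    simp only [Finset.disjoint_left, Finset.mem_singleton, Finset.mem_insert]
    rintro a rfl
    push_neg
    exact ⟨fun h => hz0 h.symm, fun h => hz0 (by omega)⟩
  obtain ⟨s, -, -, hs', hsW⟩ := hext {0} {z, -z} hdisj (singlefree 0)
  have hs : s ∈ Z := by simpa using hs' 0 (Finset.mem_singleton_self 0)
  have hs0 : s ≠ 0 := fun h => h0 (h ▸ hs)
  have hn1 : s - z ∉ Z := hsW z (by simp)
  have hn3 : s + z ∉ Z := by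
    have := hsW (-z) (by simp)
    rwa [show s - -z = s + z by ring] at this
  have hn2 : z - s ∉ Z := fun h => hn1 (by simpa [show -(z - s) = s - z by ring] using hsym _ h)
  have hn4 : -s - z ∉ Z := fun h => hn3 (by simpa [show -(-s - z) = s + z by ring] using hsym _ h)
  have hno : ∀ w : ℤ, (w = s - z ∨ w = z - s ∨ w = s + z ∨ w = -s - z ∨ w = 0) → w ∉ Z := by
    rintro w (rfl | rfl | rfl | rfl | rfl)
    exacts [hn1, hn2, hn3, hn4, h0]
  -- arithmetic disequalities
  have d1 : s ≠ 2 * z := fun h => hn1 (by rw [show s - z = z by omega]; exact hz)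
  have d2 : s ≠ -(2 * z) := fun h => hn3 (by rw [show s + z = -z by omega]; exact hsym z hz)
  have d3 : 2 * s ≠ z := fun h => hn1 (by rw [show s - z = -s by omega]; exact hsym s hs)
  have d4 : 2 * s ≠ -z := fun h => hn3 (by rw [show s + z = -s by omega]; exact hsym s hs)
  -- Step 3: the 4-cycle U = {-z, 0, s-z, s} is triangle-free
  set U : Finset ℤ := {-z, 0, s - z, s} with hU
  have memU : ∀ x ∈ U, x = -z ∨ x = 0 ∨ x = s - z ∨ x = s := by
    intro x hx
    simpa [hU, Finset.mem_insert, Finset.mem_singleton] using hx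
  have key : ∀ x y : ℤ, (x = -z ∨ x = 0 ∨ x = s - z ∨ x = s) →
      (y = -z ∨ y = 0 ∨ y = s - z ∨ y = s) → x - y ∈ Z →
      x - y = z ∨ x - y = -z ∨ x - y = s ∨ x - y = -s := by
    rintro x y (rfl | rfl | rfl | rfl) (rfl | rfl | rfl | rfl) hxy <;>
      first
        | omega
        | exact absurd hxy (hno _ (by omega))
  have Ufree : ¬ ∃ a ∈ U, ∃ b ∈ U, ∃ c ∈ U, a - b ∈ Z ∧ a - c ∈ Z ∧ b - c ∈ Z := by
    rintro ⟨a, ha, b, hb, c, hc, h1, h2, h3⟩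
    have e1 := key a b (memU a ha) (memU b hb) h1
    have e2 := key a c (memU a ha) (memU c hc) h2
    have e3 := key b c (memU b hb) (memU c hc) h3
    rcases e1 with h | h | h | h <;> rcases e2 with h' | h' | h' | h' <;>
      rcases e3 with h'' | h'' | h'' | h'' <;> omega
  obtain ⟨v, -, -, hv, -⟩ := hext U ∅ (Finset.disjoint_empty_right _) Ufree
  have hv1 : v - -z ∈ Z := hv (-z) (by simp [hU])
  have hv2 : v - 0 ∈ Z := hv 0 (by simp [hU])
  have hv3 : v - (s - z) ∈ Z := hv (s - z) (by simp [hU])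
  have hv4 : v - s ∈ Z := hv s (by simp [hU])
  -- K₄ on {v+z, v, s, 0}
  exact hK4 ⟨v + z, v, s, 0,
    by rw [show v + z - v = z by ring]; exact hz,
    by rw [show v + z - s = v - (s - z) by ring]; exact hv3,
    by rw [show v + z - 0 = v - -z by ring]; exact hv1,
    hv4,
    hv2,
    by rw [show s - 0 = s by ring]; exact hs⟩
end

section
/- There exists a closed symmetric set Z ⊆ (0, ∞) (a countable union of closed intervals) such that the shift-invariant graph on ℝ with edge relation x ~ y iff |x − y| ∈ Z is topologically universal: for every pair of disjoint finite sets {x₁,…,xₙ}, {y₁,…,yₘ} ⊂ ℝ, the set of points c with |c − xᵢ| ∈ Z for all i and |c − yⱼ| ∉ Z for all j has nonempty interior. -/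
open Set

noncomputable section UnivGraph

private def datU (n : ℕ) : List ℚ × ℚ × ℕ := Denumerable.ofNat (List ℚ × ℚ × ℕ) n

private def MU : ℕ → ℝ
  | 0 => 1
  | n + 1 => MU n + 2 * ((datU n).2.2 : ℝ) + 1

private def condU (k : ℕ) : Prop :=
  k.unpair.2 < (datU k.unpair.1).1.length ∧ 0 < (datU k.unpair.1).2.1 ∧
    (datU k.unpair.1).2.1 < (datU k.unpair.1).1.getD k.unpair.2 0 ∧
    (datU k.unpair.1).1.getD k.unpair.2 0 + (datU k.unpair.1).2.1 ≤ ((datU k.unpair.1).2.2 : ℚ)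

private instance : DecidablePred condU := fun k => by unfold condU; infer_instance

private def IU (k : ℕ) : ℝ × ℝ :=
  if condU k then
    (MU k.unpair.1 + ((datU k.unpair.1).1.getD k.unpair.2 0 : ℝ) - ((datU k.unpair.1).2.1 : ℝ),
     MU k.unpair.1 + ((datU k.unpair.1).1.getD k.unpair.2 0 : ℝ) + ((datU k.unpair.1).2.1 : ℝ))
  else (1, 0)

private def ZU : Set ℝ := ⋃ k : ℕ, Set.Icc (IU k).1 (IU k).2

private lemma one_le_MU (n : ℕ) : 1 ≤ MU n := by
  induction n with
  | zero => simp [MU]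
  | succ n ih =>
    have : (0:ℝ) ≤ ((datU n).2.2 : ℝ) := Nat.cast_nonneg _
    simp only [MU]; linarith

private lemma MU_strictMono : StrictMono MU := by
  apply strictMono_nat_of_lt_succ
  intro n
  have : (0:ℝ) ≤ ((datU n).2.2 : ℝ) := Nat.cast_nonneg _
  simp only [MU]; linarith

private lemma add_one_le_MU (n : ℕ) : (n : ℝ) + 1 ≤ MU n := by
  induction n with
  | zero => simp [MU]
  | succ n ih =>
    have : (0:ℝ) ≤ ((datU n).2.2 : ℝ) := Nat.cast_nonneg _
    simp only [MU]; push_cast; linarith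

private lemma IU_spec {k : ℕ} {x : ℝ} (hx : x ∈ Set.Icc (IU k).1 (IU k).2) :
    condU k ∧
      |x - (MU k.unpair.1 + ((datU k.unpair.1).1.getD k.unpair.2 0 : ℝ))|
        ≤ ((datU k.unpair.1).2.1 : ℝ) ∧
      MU k.unpair.1 < x ∧ x ≤ MU k.unpair.1 + ((datU k.unpair.1).2.2 : ℝ) := by
  by_cases h : condU k
  · refine ⟨h, ?_⟩
    rw [IU, if_pos h] at hx
    obtain ⟨h1, h2⟩ := hx
    dsimp only at h1 h2
    obtain ⟨-, hδ, hδr, hrg⟩ := h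
    have hδ' : (0:ℝ) < ((datU k.unpair.1).2.1 : ℝ) := by exact_mod_cast hδ
    have hδr' : ((datU k.unpair.1).2.1 : ℝ) < ((datU k.unpair.1).1.getD k.unpair.2 0 : ℝ) := by
      exact_mod_cast hδr
    have hrg' : ((datU k.unpair.1).1.getD k.unpair.2 0 : ℝ) + ((datU k.unpair.1).2.1 : ℝ)
        ≤ ((datU k.unpair.1).2.2 : ℝ) := by exact_mod_cast hrg
    refine ⟨abs_le.2 ⟨by linarith, by linarith⟩, by linarith, by linarith⟩
  · rw [IU, if_neg h] at hx
    exact absurd (hx.1.trans hx.2) (by norm_num)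

private lemma ZU_closed : IsClosed ZU := by
  apply LocallyFinite.isClosed_iUnion _ (fun k => isClosed_Icc)
  intro x
  obtain ⟨N, hN⟩ := exists_nat_gt x
  have hxM : x < MU N := hN.trans_le (by linarith [add_one_le_MU N])
  refine ⟨Set.Iio (MU N), Iio_mem_nhds hxM, ?_⟩
  have key : {k : ℕ | (Set.Icc (IU k).1 (IU k).2 ∩ Set.Iio (MU N)).Nonempty} ⊆
      Nat.unpair ⁻¹' (Set.Iio N ×ˢ Set.Iio ((Finset.range N).sup fun n => (datU n).1.length)) := by
    rintro k ⟨y, hy1, hy2⟩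
    obtain ⟨hcond, _, hlt, _⟩ := IU_spec hy1
    have hnN : k.unpair.1 < N := by
      by_contra hc
      push_neg at hc
      exact absurd (hlt.trans hy2) (not_lt.2 (MU_strictMono.monotone hc))
    exact ⟨hnN, lt_of_lt_of_le hcond.1 (Finset.le_sup (f := fun n => (datU n).1.length) (Finset.mem_range.2 hnN))⟩
  refine Set.Finite.subset (Set.Finite.preimage ?_ ((Set.finite_Iio _).prod (Set.finite_Iio _))) key
  intro a _ b _ hab
  have := congrArg (fun p : ℕ × ℕ => Nat.pair p.1 p.2) hab
  simpa [Nat.pair_unpair] using this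

private lemma ZU_pos : ZU ⊆ Set.Ioi (0 : ℝ) := by
  intro x hx
  obtain ⟨_, hs, hs2⟩ := Set.mem_iUnion.1 hx
  obtain ⟨_, _, hlt, _⟩ := IU_spec ⟨hs, hs2⟩
  exact lt_of_lt_of_le (by linarith [one_le_MU ‹ℕ›.unpair.1] : (0:ℝ) < MU _) hlt.le |>.trans_le le_rfl

private lemma datU_surj (d : List ℚ × ℚ × ℕ) : ∃ n, datU n = d :=
  ⟨_, Denumerable.ofNat_encode d⟩

end UnivGraph


/-- There is a closed set Z ⊆ (0,∞) (a countable union of closed intervals) such that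
the shift-invariant graph x ~ y ↔ |x - y| ∈ Z on ℝ is topologically universal. -/
theorem exists_topologically_universal_shift_invariant_graph :
    ∃ Z : Set ℝ, IsClosed Z ∧ Z ⊆ Set.Ioi (0 : ℝ) ∧
      (∃ I : ℕ → ℝ × ℝ, Z = ⋃ n : ℕ, Set.Icc (I n).1 (I n).2) ∧
      ∀ U W : Finset ℝ, Disjoint U W →
        (interior {c : ℝ | (∀ u ∈ U, |c - u| ∈ Z) ∧ ∀ w ∈ W, |c - w| ∉ Z}).Nonempty := by
  classical
  refine ⟨ZU, ZU_closed, ZU_pos, ⟨IU, rfl⟩, ?_⟩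
  intro U W hUW
  -- separation constant
  have hsep : ∃ ε : ℝ, 0 < ε ∧ ∀ u ∈ U, ∀ w ∈ W, 3 * ε < |u - w| := by
    set T := (U ×ˢ W).image (fun p : ℝ × ℝ => |p.1 - p.2|) with hT
    rcases T.eq_empty_or_nonempty with h | h
    · refine ⟨1, one_pos, fun u hu w hw => ?_⟩
      exfalso
      have hx : |u - w| ∈ T := Finset.mem_image.2 ⟨(u, w), Finset.mem_product.2 ⟨hu, hw⟩, rfl⟩
      rw [h] at hx
      exact Finset.notMem_empty _ hx
    · have hpos : 0 < T.min' h := by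
        obtain ⟨⟨u, w⟩, hmem, heq⟩ := Finset.mem_image.1 (T.min'_mem h)
        obtain ⟨hu, hw⟩ := Finset.mem_product.1 hmem
        have hne : u ≠ w := fun he => (Finset.disjoint_left.1 hUW hu) (he ▸ hw)
        rw [← heq]
        exact abs_pos.2 (sub_ne_zero.2 hne)
      refine ⟨T.min' h / 4, by linarith, fun u hu w hw => ?_⟩
      have hmem : |u - w| ∈ T :=
        Finset.mem_image.2 ⟨(u, w), Finset.mem_product.2 ⟨hu, hw⟩, rfl⟩
      have := T.min'_le _ hmem
      linarith
  obtain ⟨ε, hε, hsep⟩ := hsep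
  obtain ⟨δ, hδ0, hδε⟩ := exists_rat_btwn hε
  have hδq : (0 : ℚ) < δ := by exact_mod_cast hδ0
  -- rational approximations from below
  have hq : ∀ u : ℝ, ∃ qq : ℚ, u - (δ : ℝ) / 2 < qq ∧ (qq : ℝ) < u :=
    fun u => exists_rat_btwn (by linarith)
  choose q hq1 hq2 using hq
  -- bounds on the configuration
  set S : Finset ℝ := insert (0 : ℝ) (U ∪ W) with hSdef
  have hS : S.Nonempty := ⟨0, Finset.mem_insert_self _ _⟩
  have hUS : ∀ u ∈ U, u ∈ S := fun u hu =>
    Finset.mem_insert_of_mem (Finset.mem_union_left _ hu)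
  have hWS : ∀ w ∈ W, w ∈ S := fun w hw =>
    Finset.mem_insert_of_mem (Finset.mem_union_right _ hw)
  obtain ⟨m', hm'⟩ := exists_rat_gt (S.max' hS + 1 + (δ : ℝ))
  obtain ⟨g, hg⟩ := exists_nat_ge ((m' : ℝ) - S.min' hS + 2 * (δ : ℝ) + 2)
  set L : List ℚ := U.toList.map (fun u => m' - q u) with hL
  obtain ⟨n, hdat⟩ := datU_surj (L, δ, g)
  have hLlen : L.length = U.toList.length := by simp [hL]
  -- helper: value of L at index i
  have hgetD : ∀ (i : ℕ) (hi : i < U.toList.length),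
      L.getD i 0 = m' - q (U.toList.get ⟨i, hi⟩) := by
    intro i hi
    have hi' : i < L.length := by rwa [hLlen]
    rw [List.getD_eq_getElem L 0 hi']
    simp only [hL, List.getElem_map, List.get_eq_getElem]
  have hsub : Set.Ioo (MU n + (m' : ℝ)) (MU n + (m' : ℝ) + (δ : ℝ) / 2) ⊆
      {c : ℝ | (∀ u ∈ U, |c - u| ∈ ZU) ∧ ∀ w ∈ W, |c - w| ∉ ZU} := by
    rintro c ⟨hc1, hc2⟩
    have hMU1 := one_le_MU n
    constructor
    · intro u hu
      have hule := S.le_max' u (hUS u hu)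
      have humin := S.min'_le u (hUS u hu)
      have hcu : 0 < c - u := by linarith
      rw [abs_of_pos hcu]
      have humem : u ∈ U.toList := Finset.mem_toList.2 hu
      obtain ⟨⟨i, hi⟩, hgot⟩ := List.mem_iff_get.1 humem
      have hri : L.getD i 0 = m' - q u := by rw [hgetD i hi, hgot]
      have hi' : i < L.length := by rwa [hLlen]
      have hqu1 := hq1 u
      have hqu2 := hq2 u
      have hc3 : δ < L.getD i 0 := by
        rw [hri]
        have h3 : (δ : ℝ) < (((m' - q u : ℚ)) : ℝ) := by push_cast; linarith
        exact_mod_cast h3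
      have hc4 : L.getD i 0 + δ ≤ (g : ℚ) := by
        rw [hri]
        have h4 : (((m' - q u + δ : ℚ)) : ℝ) ≤ ((g : ℕ) : ℝ) := by push_cast; linarith
        exact_mod_cast h4
      have hcond : condU (Nat.pair n i) := by
        simp only [condU, Nat.unpair_pair, hdat]
        exact ⟨hi', hδq, hc3, hc4⟩
      refine Set.mem_iUnion.2 ⟨Nat.pair n i, ?_⟩
      rw [IU, if_pos hcond]
      simp only [Nat.unpair_pair, hdat, hri]
      constructor
      · push_cast; linarith
      · push_cast; linarith
    · intro w hw hmem
      have hwle := S.le_max' w (hWS w hw)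
      have hwmin := S.min'_le w (hWS w hw)
      have hcw : 0 < c - w := by linarith
      rw [abs_of_pos hcw] at hmem
      obtain ⟨k, hk⟩ := Set.mem_iUnion.1 hmem
      obtain ⟨hcond, habs, hlow, hhigh⟩ := IU_spec hk
      have hMn_lt : MU n < c - w := by linarith
      have hup : c - w < MU n + (g : ℝ) := by linarith
      rcases lt_trichotomy k.unpair.1 n with h | h | h
      · have h1 : MU (k.unpair.1 + 1) ≤ MU n := MU_strictMono.monotone h
        have h2 : MU (k.unpair.1 + 1) = MU k.unpair.1 + 2 * ((datU k.unpair.1).2.2 : ℝ) + 1 :=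
          rfl
        have hg0 : (0 : ℝ) ≤ ((datU k.unpair.1).2.2 : ℝ) := Nat.cast_nonneg _
        linarith
      · simp only [condU] at hcond
        rw [h, hdat] at hcond habs
        obtain ⟨hi, _, _, _⟩ := hcond
        dsimp only at hi habs
        have hiU : k.unpair.2 < U.toList.length := by rwa [hLlen] at hi
        set u : ℝ := U.toList.get ⟨k.unpair.2, hiU⟩ with hu'
        have huU : u ∈ U := Finset.mem_toList.1 (List.get_mem U.toList _)
        have hri : L.getD k.unpair.2 0 = m' - q u := hgetD _ hiU
        rw [hri] at habs
        have hcast : (((m' - q u : ℚ)) : ℝ) = (m' : ℝ) - (q u : ℝ) := by push_cast; ring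
        rw [hcast] at habs
        obtain ⟨hA, hB⟩ := abs_le.1 habs
        have h3 := hsep u huU w hw
        have hqu1 := hq1 u
        have hqu2 := hq2 u
        rcases lt_or_ge u w with hc' | hc'
        · rw [abs_of_neg (by linarith : u - w < 0)] at h3
          linarith
        · have hne : u ≠ w := fun he => (Finset.disjoint_left.1 hUW huU) (he ▸ hw)
          rw [abs_of_pos (sub_pos.2 (lt_of_le_of_ne hc' (Ne.symm hne)))] at h3
          linarith
      · have h1 : MU (n + 1) ≤ MU k.unpair.1 := MU_strictMono.monotone h
        have h2 : MU (n + 1) = MU n + 2 * ((datU n).2.2 : ℝ) + 1 := rfl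
        rw [hdat] at h2
        dsimp only at h2
        linarith
  refine ⟨MU n + (m' : ℝ) + (δ : ℝ) / 4, interior_maximal hsub isOpen_Ioo ?_⟩
  exact ⟨by linarith, by linarith⟩
end

section
/- Let (X, E) be a topologically universal graph on a Polish space X, i.e., for all disjoint finite sets {x₁,…,xₙ}, {y₁,…,yₘ} ⊂ X the set ⋂ᵢ E_{xᵢ} ∩ ⋂ⱼ (X \ E_{yⱼ}) has nonempty interior, where E_x = {y : (x,y) ∈ E}. Then for every Borel probability measure m on X that is positive on every nonempty open set, for m^∞-almost every sequence (x_k) ∈ X^ℕ of i.i.d. points, the induced countable graph on {x_k} (with edges (x_i, x_j) ∈ E) satisfies the extension property of the universal graph. -/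
open MeasureTheory

/-- μ is the law of an i.i.d. sequence with marginal m (the infinite product measure m^∞),
characterized by its finite-dimensional distributions. -/
def IsIID {X : Type*} [MeasurableSpace X] (m : Measure X) (μ : Measure (ℕ → X)) : Prop :=
  IsProbabilityMeasure μ ∧
  ∀ n : ℕ, Measure.map (fun x (i : Fin n) => x (i : ℕ)) μ = Measure.pi (fun _ : Fin n => m)

theorem topologically_universal_gives_extension_property
    {X : Type*} [TopologicalSpace X] [PolishSpace X] [MeasurableSpace X] [BorelSpace X]
    (E : Set (X × X)) (hEclosed : IsClosed E)
    (hsym : ∀ x y : X, (x, y) ∈ E → (y, x) ∈ E) (hdiag : ∀ x : X, (x, x) ∉ E)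
    (huniv : ∀ U W : Finset X, Disjoint U W →
      (interior {z : X | (∀ u ∈ U, (u, z) ∈ E) ∧ ∀ w ∈ W, (w, z) ∉ E}).Nonempty)
    (m : Measure X) [IsProbabilityMeasure m]
    (hm : ∀ O : Set X, IsOpen O → O.Nonempty → 0 < m O)
    (μ : Measure (ℕ → X)) (hμ : IsIID m μ) :
    ∀ᵐ x ∂μ, ∀ U W : Finset X,
      (↑U ⊆ Set.range x) → (↑W ⊆ Set.range x) → Disjoint U W →
      ∃ v ∈ Set.range x, (∀ u ∈ U, (v, u) ∈ E) ∧ ∀ w ∈ W, (v, w) ∉ E := by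
  obtain ⟨hprob, hfd⟩ := hμ
  obtain ⟨B, hBc, hBne, hBbasis⟩ := TopologicalSpace.exists_countable_basis X
  have key : ∀ b ∈ B, μ {x : ℕ → X | ∀ k, x k ∉ b} = 0 := by
    intro b hb
    have hbopen : IsOpen b := hBbasis.isOpen hb
    have hbne : b.Nonempty := Set.nonempty_iff_ne_empty.2 (fun h => hBne (h ▸ hb))
    have hmb : 0 < m b := hm b hbopen hbne
    have hcompl : m bᶜ < 1 := by
      rw [measure_compl hbopen.measurableSet (measure_ne_top m b), measure_univ]
      exact ENNReal.sub_lt_self ENNReal.one_ne_top one_ne_zero hmb.ne'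
    have hle : ∀ n : ℕ, μ {x : ℕ → X | ∀ k, x k ∉ b} ≤ (m bᶜ) ^ n := by
      intro n
      have hmeas : Measurable (fun (x : ℕ → X) (i : Fin n) => x (i : ℕ)) :=
        measurable_pi_lambda _ (fun i => measurable_pi_apply _)
      have hsub : {x : ℕ → X | ∀ k, x k ∉ b} ⊆
          (fun x (i : Fin n) => x (i : ℕ)) ⁻¹' (Set.pi Set.univ (fun _ : Fin n => bᶜ)) := by
        intro x hx i _
        exact hx _
      have hmeasSet : MeasurableSet (Set.pi Set.univ (fun _ : Fin n => bᶜ)) :=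
        MeasurableSet.univ_pi (fun _ => hbopen.measurableSet.compl)
      calc μ {x : ℕ → X | ∀ k, x k ∉ b}
          ≤ μ ((fun x (i : Fin n) => x (i : ℕ)) ⁻¹'
              (Set.pi Set.univ (fun _ : Fin n => bᶜ))) := measure_mono hsub
        _ = (Measure.map (fun x (i : Fin n) => x (i : ℕ)) μ)
              (Set.pi Set.univ (fun _ : Fin n => bᶜ)) :=
            (Measure.map_apply hmeas hmeasSet).symm
        _ = ∏ _i : Fin n, m bᶜ := by rw [hfd n, Measure.pi_pi]
        _ = (m bᶜ) ^ n := by simp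
    have htends := ENNReal.tendsto_pow_atTop_nhds_zero_of_lt_one hcompl
    have := ge_of_tendsto' htends hle
    exact le_antisymm this zero_le
  have ae : ∀ᵐ x ∂μ, ∀ b ∈ B, ∃ k, x k ∈ b := by
    rw [MeasureTheory.ae_ball_iff hBc]
    intro b hb
    have h0 := key b hb
    rw [ae_iff]
    convert h0 using 2
    ext x
    simp
  filter_upwards [ae] with x hx U W hU hW hUW
  obtain ⟨z, hz⟩ := huniv U W hUW
  have hopen : IsOpen (interior {z : X | (∀ u ∈ U, (u, z) ∈ E) ∧ ∀ w ∈ W, (w, z) ∉ E}) :=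
    isOpen_interior
  obtain ⟨b, hbB, hzb, hbsub⟩ := hBbasis.exists_subset_of_mem_open hz hopen
  obtain ⟨k, hk⟩ := hx b hbB
  have hmem : x k ∈ {z : X | (∀ u ∈ U, (u, z) ∈ E) ∧ ∀ w ∈ W, (w, z) ∉ E} :=
    interior_subset (hbsub hk)
  refine ⟨x k, Set.mem_range_self k, fun u hu => hsym _ _ (hmem.1 u hu),
    fun w hw hcon => hmem.2 w hw (hsym _ _ hcon)⟩
end

section
/- For 0 < p < 1, the Bernoulli(p) random graph on ℕ (each unordered pair of distinct vertices independently an edge with probability p) almost surely satisfies the extension property: for all disjoint finite sets U, W of vertices there exists a vertex adjacent to all of U and none of W. -/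
open MeasureTheory

/-- Unordered pairs of distinct naturals, as ordered pairs (i,j) with i < j. -/
abbrev PairIdx := {q : ℕ × ℕ // q.1 < q.2}

/-- Adjacency in the random graph coded by ω : each unordered pair is an edge iff its
Bernoulli variable equals `true`. -/
def RandAdj (ω : PairIdx → Bool) (i j : ℕ) : Prop :=
  ∃ h : min i j < max i j, ω ⟨(min i j, max i j), h⟩ = true

/-- Measure of a cylinder event. -/
lemma cylinder_measure
    (p : ENNReal) (hp1 : p < 1)
    (μ : Measure (PairIdx → Bool))
    (hμ : ∀ s : Finset PairIdx,
      Measure.map (fun (ω : PairIdx → Bool) (i : {q // q ∈ s}) => ω ↑i) μ =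
        Measure.pi (fun _ : {q // q ∈ s} => (PMF.bernoulli p.toNNReal (by simpa using ENNReal.toNNReal_mono ENNReal.one_ne_top hp1.le)).toMeasure))
    (s : Finset PairIdx) (f : PairIdx → Bool) :
    μ {ω | ∀ q ∈ s, ω q = f q} = ∏ q ∈ s, cond (f q) p (1 - p) := by
  have hmeas : Measurable (fun (ω : PairIdx → Bool) (i : {q // q ∈ s}) => ω ↑i) :=
    measurable_pi_lambda _ fun i => measurable_pi_apply _
  have hset : MeasurableSet (Set.univ.pi fun i : {q // q ∈ s} => ({f ↑i} : Set Bool)) :=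
    MeasurableSet.univ_pi fun i => measurableSet_singleton _
  have hE : {ω : PairIdx → Bool | ∀ q ∈ s, ω q = f q} =
      (fun (ω : PairIdx → Bool) (i : {q // q ∈ s}) => ω ↑i) ⁻¹'
        (Set.univ.pi fun i : {q // q ∈ s} => ({f ↑i} : Set Bool)) := by
    ext ω
    simp [Set.mem_pi, Subtype.forall]
  rw [hE, ← Measure.map_apply hmeas hset, hμ s, Measure.pi_pi]
  have : ∀ i : {q // q ∈ s},
      (PMF.bernoulli p.toNNReal (by simpa using ENNReal.toNNReal_mono ENNReal.one_ne_top hp1.le)).toMeasure {f ↑i} = cond (f ↑i) p (1 - p) := by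
    intro i
    rw [PMF.toMeasure_apply_singleton _ _ (measurableSet_singleton _)]
    rw [PMF.bernoulli_apply (h := by simpa using ENNReal.toNNReal_mono ENNReal.one_ne_top hp1.le)]
    cases h : f ↑i <;> simp [ENNReal.coe_sub, ENNReal.coe_toNNReal (hp1.trans ENNReal.one_lt_top).ne]
  simp_rw [this]
  exact Finset.prod_coe_sort s fun q => cond (f q) p (1 - p)

theorem bernoulli_random_graph_ae_extension_property
    (p : ENNReal) (hp0 : 0 < p) (hp1 : p < 1)
    (μ : Measure (PairIdx → Bool)) [IsProbabilityMeasure μ]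
    (hμ : ∀ s : Finset PairIdx,
      Measure.map (fun (ω : PairIdx → Bool) (i : {q // q ∈ s}) => ω ↑i) μ =
        Measure.pi (fun _ : {q // q ∈ s} => (PMF.bernoulli p.toNNReal (by simpa using ENNReal.toNNReal_mono ENNReal.one_ne_top hp1.le)).toMeasure)) :
    ∀ᵐ ω ∂μ, ∀ U W : Finset ℕ, Disjoint U W →
      ∃ v : ℕ, v ∉ U ∧ v ∉ W ∧ (∀ u ∈ U, RandAdj ω v u) ∧ (∀ w ∈ W, ¬ RandAdj ω v w) := by
  have key : ∀ U W : Finset ℕ, Disjoint U W → ∀ᵐ ω ∂μ,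
      ∃ v : ℕ, v ∉ U ∧ v ∉ W ∧ (∀ u ∈ U, RandAdj ω v u) ∧ (∀ w ∈ W, ¬ RandAdj ω v w) := by
    intro U W hUW
    set B : ℕ := (U ∪ W).sup id with hB
    set v : ℕ → ℕ := fun k => B + 1 + k with hv
    have hvgt : ∀ k, ∀ x ∈ U ∪ W, x < v k := by
      intro k x hx
      have : x ≤ B := Finset.le_sup (f := id) hx
      simp only [hv]; omega
    set f : PairIdx → Bool := fun q => decide (q.1.1 ∈ U) with hf
    set S : ℕ → Finset PairIdx := fun k =>
      (U ∪ W).attach.image (fun x => (⟨(x.1, v k), hvgt k x.1 x.2⟩ : PairIdx)) with hS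
    set A : ℕ → Set (PairIdx → Bool) := fun k => {ω | ∀ q ∈ S k, ω q = f q} with hA
    -- measurability
    have hAmeas : ∀ k, MeasurableSet (A k) := by
      intro k
      have : A k = ⋂ q ∈ S k, (fun ω : PairIdx → Bool => ω q) ⁻¹' {f q} := by
        ext ω; simp [hA]
      rw [this]
      exact MeasurableSet.biInter (Finset.countable_toSet _)
        fun q _ => (measurable_pi_apply q) (measurableSet_singleton _)
    -- measure of each A k
    have hmem : ∀ k (q : PairIdx), q ∈ S k ↔ ∃ x ∈ U ∪ W, q.1 = (x, v k) := by
      intro k q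
      simp only [hS, Finset.mem_image, Finset.mem_attach, true_and, Subtype.exists]
      constructor
      · rintro ⟨x, hx, rfl⟩; exact ⟨x, hx, rfl⟩
      · rintro ⟨x, hx, hq⟩; exact ⟨x, hx, Subtype.ext hq.symm⟩
    have hAval : ∀ k, μ (A k) = ∏ x ∈ (U ∪ W).attach, cond (decide (x.1 ∈ U)) p (1 - p) := by
      intro k
      rw [hA, cylinder_measure p hp1 μ hμ (S k) f, hS]
      rw [Finset.prod_image]
      intro a _ b _ hab
      have : a.1 = b.1 := congrArg (fun q : PairIdx => q.1.1) hab
      exact Subtype.ext this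
    have hc0 : (∏ x ∈ (U ∪ W).attach, cond (decide (x.1 ∈ U)) p (1 - p)) ≠ 0 := by
      rw [Finset.prod_ne_zero_iff]
      intro x _
      cases h : decide (x.1 ∈ U) <;> simp only [cond]
      · rw [Ne, tsub_eq_zero_iff_le]
        exact hp1.not_ge
      · exact hp0.ne'
    -- independence
    have hdisj : ∀ i j : ℕ, i ≠ j → Disjoint (S i) (S j) := by
      intro i j hij
      rw [Finset.disjoint_left]
      intro q hqi hqj
      obtain ⟨x, _, hx⟩ := (hmem i q).1 hqi
      obtain ⟨y, _, hy⟩ := (hmem j q).1 hqj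
      have : v i = v j := by rw [hx] at hy; exact (Prod.ext_iff.1 hy).2
      simp only [hv] at this; omega
    have hindep : ProbabilityTheory.iIndepSet A μ := by
      rw [ProbabilityTheory.iIndepSet_iff_meas_biInter hAmeas]
      intro F
      have hI : (⋂ k ∈ F, A k) = {ω : PairIdx → Bool | ∀ q ∈ F.biUnion S, ω q = f q} := by
        ext ω
        simp only [Set.mem_iInter, hA, Set.mem_setOf_eq, Finset.mem_biUnion]
        constructor
        · rintro h q ⟨k, hk, hq⟩; exact h k hk q hq
        · intro h k hk q hq; exact h q ⟨k, hk, hq⟩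
      rw [hI, cylinder_measure p hp1 μ hμ _ f,
        Finset.prod_biUnion (fun i _ j _ hij => hdisj i j hij)]
      refine Finset.prod_congr rfl fun k _ => ?_
      rw [hA, cylinder_measure p hp1 μ hμ (S k) f]
    -- Borel-Cantelli
    have htsum : (∑' k, μ (A k)) = ⊤ := by
      simp_rw [hAval]
      exact ENNReal.tsum_const_eq_top_of_ne_zero hc0
    have hlimsup : μ (Filter.limsup A Filter.atTop) = 1 :=
      ProbabilityTheory.measure_limsup_eq_one hAmeas hindep htsum
    have hae : ∀ᵐ ω ∂μ, ω ∈ Filter.limsup A Filter.atTop := by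
      have hc : μ (Filter.limsup A Filter.atTop)ᶜ = 0 :=
        (prob_compl_eq_zero_iff (MeasurableSet.measurableSet_limsup hAmeas)).2 hlimsup
      rw [MeasureTheory.ae_iff]
      simpa [Set.compl_def] using hc
    filter_upwards [hae] with ω hω
    obtain ⟨k, hk⟩ : ∃ k, ω ∈ A k := by
      have := Filter.mem_limsup_iff_frequently_mem.1 hω
      exact this.exists
    refine ⟨v k, ?_, ?_, ?_, ?_⟩
    · intro h; exact absurd (hvgt k _ (Finset.mem_union_left W h)) (lt_irrefl _)
    · intro h; exact absurd (hvgt k _ (Finset.mem_union_right U h)) (lt_irrefl _)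
    · intro u hu
      have hulv : u < v k := hvgt k u (Finset.mem_union_left W hu)
      have hmin : min (v k) u = u := min_eq_right hulv.le
      have hmax : max (v k) u = v k := max_eq_left hulv.le
      refine ⟨by rw [hmin, hmax]; exact hulv, ?_⟩
      have hq : (⟨(min (v k) u, max (v k) u), by rw [hmin, hmax]; exact hulv⟩ : PairIdx) ∈ S k := by
        rw [hmem]
        refine ⟨u, Finset.mem_union_left W hu, ?_⟩
        show (min (v k) u, max (v k) u) = (u, v k)
        rw [hmin, hmax]
      have := hk _ hq
      rw [this, hf]
      simp only [hmin]
      exact decide_eq_true hu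
    · intro w hw ⟨hlt, heq⟩
      have hwlv : w < v k := hvgt k w (Finset.mem_union_right U hw)
      have hmin : min (v k) w = w := min_eq_right hwlv.le
      have hmax : max (v k) w = v k := max_eq_left hwlv.le
      have hq : (⟨(min (v k) w, max (v k) w), hlt⟩ : PairIdx) ∈ S k := by
        rw [hmem]
        refine ⟨w, Finset.mem_union_right U hw, ?_⟩
        show (min (v k) w, max (v k) w) = (w, v k)
        rw [hmin, hmax]
      have h2 := hk _ hq
      rw [heq, hf] at h2
      simp only [hmin] at h2
      have : w ∈ U := of_decide_eq_true h2.symm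
      exact absurd this (Finset.disjoint_right.1 hUW hw)
  rw [MeasureTheory.ae_all_iff]
  intro U
  rw [MeasureTheory.ae_all_iff]
  intro W
  by_cases h : Disjoint U W
  · filter_upwards [key U W h] with ω hω _
    exact hω
  · filter_upwards with ω hd
    exact absurd hd h
end

section
/- Let G be a shift-invariant graph on an abelian group A with edge relation x ~ y iff x − y ∈ Z, where Z = −Z and 0 ∉ Z. If G satisfies the K₄-free extension property (for all disjoint finite sets U, W with U inducing a triangle-free graph, some vertex is adjacent to all of U and none of W), then G contains a 4-clique; hence no shift-invariant universal K₄-free graph exists on an abelian group. -/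
theorem abelian_extension_property_gives_four_clique
    {A : Type*} [AddCommGroup A] (Z : Set A)
    (hsym : ∀ z ∈ Z, -z ∈ Z) (h0 : (0 : A) ∉ Z)
    (hext : ∀ U W : Finset A, Disjoint U W →
      (¬ ∃ a ∈ U, ∃ b ∈ U, ∃ c ∈ U, a - b ∈ Z ∧ a - c ∈ Z ∧ b - c ∈ Z) →
      ∃ v : A, v ∉ U ∧ v ∉ W ∧ (∀ u ∈ U, v - u ∈ Z) ∧ (∀ w ∈ W, v - w ∉ Z)) :
    ∃ a b c d : A, a ≠ b ∧ a ≠ c ∧ a ≠ d ∧ b ≠ c ∧ b ≠ d ∧ c ≠ d ∧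
      a - b ∈ Z ∧ a - c ∈ Z ∧ a - d ∈ Z ∧ b - c ∈ Z ∧ b - d ∈ Z ∧ c - d ∈ Z := by
  classical
  -- a trivially triangle-free singleton
  have htf0 : ¬ ∃ a ∈ ({0} : Finset A), ∃ b ∈ ({0} : Finset A), ∃ c ∈ ({0} : Finset A),
      a - b ∈ Z ∧ a - c ∈ Z ∧ b - c ∈ Z := by
    rintro ⟨a, ha, b, hb, c, hc, h1, -, -⟩
    simp only [Finset.mem_singleton] at ha hb
    subst ha; subst hb
    exact h0 (by simpa using h1)
  -- Step 0: get some z ∈ Z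
  obtain ⟨z, -, -, hzZ, -⟩ := hext {0} ∅ (by simp) htf0
  have hz : z ∈ Z := by simpa using hzZ 0 (by simp)
  have hzne : z ≠ 0 := fun h => h0 (h ▸ hz)
  -- Step 1: get v ∈ Z with v - z ∉ Z and v + z ∉ Z
  obtain ⟨v, -, hvW, hvZ, hvW'⟩ := hext {0} {z, -z}
    (by
      simp only [Finset.disjoint_left, Finset.mem_singleton, Finset.mem_insert]
      rintro a rfl
      push_neg
      exact ⟨fun h => hzne h.symm, fun h => hzne (by simpa using congrArg Neg.neg h.symm)⟩)
    htf0
  have hv : v ∈ Z := by simpa using hvZ 0 (by simp)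
  have nvz : v - z ∉ Z := hvW' z (by simp)
  have nvpz : v + z ∉ Z := by
    have := hvW' (-z) (by simp)
    simpa [sub_neg_eq_add] using this
  -- Step 2: U₂ = {0, -v, -z, -v-z} is a 4-cycle, hence triangle-free
  have htf2 : ¬ ∃ a ∈ ({0, -v, -z, -v - z} : Finset A), ∃ b ∈ ({0, -v, -z, -v - z} : Finset A),
      ∃ c ∈ ({0, -v, -z, -v - z} : Finset A), a - b ∈ Z ∧ a - c ∈ Z ∧ b - c ∈ Z := by
    have nzv : z - v ∉ Z := fun h => nvz (by simpa [neg_sub] using hsym _ h)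
    have nnvz : -v - z ∉ Z := fun h =>
      nvpz (by simpa [neg_sub, sub_neg_eq_add, add_comm] using hsym _ h)
    clear hext htf0 hzZ hvZ hvW hvW'
    rintro ⟨a, ha, b, hb, c, hc, h1, h2, h3⟩
    simp only [Finset.mem_insert, Finset.mem_singleton] at ha hb hc
    rcases ha with rfl | rfl | rfl | rfl <;>
      rcases hb with rfl | rfl | rfl | rfl <;>
        rcases hc with rfl | rfl | rfl | rfl <;>
          abel_nf at h1 h2 h3 <;>
            simp_all [sub_eq_add_neg, add_comm]
  obtain ⟨w, -, -, hwZ, -⟩ := hext {0, -v, -z, -v - z} ∅ (by simp) htf2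
  have hw : w ∈ Z := by simpa using hwZ 0 (by simp)
  have hwv : w + v ∈ Z := by
    have := hwZ (-v) (by simp)
    simpa [sub_neg_eq_add] using this
  have hwz : w + z ∈ Z := by
    have := hwZ (-z) (by simp)
    simpa [sub_neg_eq_add] using this
  have hwvz : w + v + z ∈ Z := by
    have := hwZ (-v - z) (by simp)
    have e : w - (-v - z) = w + v + z := by abel
    rwa [e] at this
  -- The four-clique: {v + w + z, v + w, v, 0}
  have hne : ∀ x y : A, x - y ∈ Z → x ≠ y := by
    intro x y h he
    exact h0 (by simpa [he] using h)
  refine ⟨v + w + z, v + w, v, 0, ?_, ?_, ?_, ?_, ?_, ?_, ?_, ?_, ?_, ?_, ?_, ?_⟩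
  · exact hne _ _ (by rw [show v + w + z - (v + w) = z by abel]; exact hz)
  · exact hne _ _ (by rw [show v + w + z - v = w + z by abel]; exact hwz)
  · exact hne _ _ (by rw [show v + w + z - 0 = w + v + z by abel]; exact hwvz)
  · exact hne _ _ (by rw [show v + w - v = w by abel]; exact hw)
  · exact hne _ _ (by rw [show v + w - 0 = w + v by abel]; exact hwv)
  · exact hne _ _ (by rw [show v - 0 = v by abel]; exact hv)
  · rw [show v + w + z - (v + w) = z by abel]; exact hz
  · rw [show v + w + z - v = w + z by abel]; exact hwz
  · rw [show v + w + z - 0 = w + v + z by abel]; exact hwvz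
  · rw [show v + w - v = w by abel]; exact hw
  · rw [show v + w - 0 = w + v by abel]; exact hwv
  · rw [show v - 0 = v by abel]; exact hv
end

section
/- Let (X, m, E) be a pure measurable graph such that for m^∞-almost every sequence (x_k) the induced countable graph satisfies the universal graph extension property. Then for every n, m ≥ 1 and for m^{n+m}-almost every pair of disjoint tuples (x₁,…,xₙ), (y₁,…,yₘ) in X, the set ⋂ᵢ E_{xᵢ} ∩ ⋂ⱼ (X \ E_{yⱼ}) has positive m-measure. -/
open MeasureTheory

section Aux

open Set

variable {X : Type*} [MeasurableSpace X] (m : Measure X) [IsProbabilityMeasure m]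

lemma aux_map_pi_comp {r L : ℕ} (σ : Fin r → Fin L) (hσ : Function.Injective σ) :
    Measure.map (fun (c : Fin L → X) (t : Fin r) => c (σ t)) (Measure.pi fun _ : Fin L => m)
      = Measure.pi fun _ : Fin r => m := by
  classical
  have hmeas : Measurable fun (c : Fin L → X) (t : Fin r) => c (σ t) :=
    measurable_pi_lambda _ fun t => measurable_pi_apply _
  refine (Measure.pi_eq fun s hs => ?_).symm
  rw [Measure.map_apply hmeas (MeasurableSet.univ_pi hs)]
  have hpre : (fun (c : Fin L → X) (t : Fin r) => c (σ t)) ⁻¹' Set.pi univ s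
      = Set.pi univ (fun i => if h : ∃ t, σ t = i then s h.choose else Set.univ) := by
    ext c
    simp only [Set.mem_preimage, Set.mem_pi, Set.mem_univ, forall_true_left]
    constructor
    · intro h i
      by_cases hi : ∃ t, σ t = i
      · rw [dif_pos hi]
        have h2 := h hi.choose
        rwa [hi.choose_spec] at h2
      · rw [dif_neg hi]; trivial
    · intro h t
      have h2 := h (σ t)
      rw [dif_pos ⟨t, rfl⟩] at h2
      have ht : (⟨t, rfl⟩ : ∃ t', σ t' = σ t).choose = t :=
        hσ (Exists.choose_spec (⟨t, rfl⟩ : ∃ t', σ t' = σ t))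
      rwa [ht] at h2
  rw [hpre, Measure.pi_pi]
  have h1 : ∀ i ∈ Finset.univ, i ∉ Finset.image σ Finset.univ →
      m (if h : ∃ t, σ t = i then s h.choose else Set.univ) = 1 := by
    intro i _ hi
    rw [dif_neg, measure_univ]
    rintro ⟨t, rfl⟩
    exact hi (Finset.mem_image_of_mem σ (Finset.mem_univ t))
  rw [← Finset.prod_subset (Finset.subset_univ (Finset.image σ Finset.univ)) h1,
    Finset.prod_image (fun a _ b _ h => hσ h)]
  refine Finset.prod_congr rfl fun t _ => ?_
  rw [dif_pos ⟨t, rfl⟩]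
  exact congrArg (fun u => m (s u)) (hσ (Exists.choose_spec (⟨t, rfl⟩ : ∃ t', σ t' = σ t)))


lemma aux_map_seq {μ : Measure (ℕ → X)}
    (hμ : ∀ L : ℕ, Measure.map (fun x (i : Fin L) => x (i : ℕ)) μ = Measure.pi (fun _ : Fin L => m))
    {r : ℕ} (σ : Fin r → ℕ) (hσ : Function.Injective σ) :
    Measure.map (fun (x : ℕ → X) (t : Fin r) => x (σ t)) μ = Measure.pi fun _ : Fin r => m := by
  classical
  set L : ℕ := (Finset.univ.sup σ) + 1 with hL
  have hlt : ∀ t, σ t < L := fun t => Nat.lt_succ_of_le (Finset.le_sup (Finset.mem_univ t))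
  set σ' : Fin r → Fin L := fun t => ⟨σ t, hlt t⟩ with hσ'
  have hσ'inj : Function.Injective σ' := fun a b h => hσ (congrArg Fin.val h)
  have hcomp : (fun (x : ℕ → X) (t : Fin r) => x (σ t))
      = (fun (c : Fin L → X) (t : Fin r) => c (σ' t)) ∘ (fun (x : ℕ → X) (i : Fin L) => x (i : ℕ)) :=
    rfl
  have hg : Measurable fun (c : Fin L → X) (t : Fin r) => c (σ' t) :=
    measurable_pi_lambda _ fun t => measurable_pi_apply _
  have hf : Measurable fun (x : ℕ → X) (i : Fin L) => x (i : ℕ) :=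
    measurable_pi_lambda _ fun i => measurable_pi_apply _
  rw [hcomp, ← Measure.map_map hg hf, hμ L, aux_map_pi_comp m σ' hσ'inj]

lemma aux_fubini_zero {Q : Type*} [MeasurableSpace Q] (ν : Measure Q) [SFinite ν] [SFinite m]
    (D : Set (Q × X)) (hD : MeasurableSet D)
    (hzero : ∀ q, m (Prod.mk q ⁻¹' D) = 0) : (ν.prod m) D = 0 := by
  rw [Measure.prod_apply hD]
  simp [hzero]

lemma aux_theta (n k : ℕ) :
    Measure.map (fun (c : Fin (n + k) → X) =>
        ((fun i : Fin n => c (Fin.castAdd k i)), (fun j : Fin k => c (Fin.natAdd n j))))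
      (Measure.pi fun _ : Fin (n + k) => m)
      = (Measure.pi fun _ : Fin n => m).prod (Measure.pi fun _ : Fin k => m) := by
  have h1 := (measurePreserving_piCongrLeft (fun _ : Fin (n + k) => m) finSumFinEquiv).symm
    (MeasurableEquiv.piCongrLeft (fun _ : Fin (n + k) => X) finSumFinEquiv)
  have h2 := measurePreserving_sumPiEquivProdPi (fun _ : Fin n ⊕ Fin k => m)
  have h3 := (h2.comp h1)
  have hfe : (fun (c : Fin (n + k) → X) =>
        ((fun i : Fin n => c (Fin.castAdd k i)), (fun j : Fin k => c (Fin.natAdd n j))))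
      = (MeasurableEquiv.sumPiEquivProdPi (fun _ : Fin n ⊕ Fin k => X)) ∘
        (MeasurableEquiv.piCongrLeft (fun _ : Fin (n + k) => X) finSumFinEquiv).symm := by
    funext c
    have hsymm : ∀ s : Fin n ⊕ Fin k,
        ((MeasurableEquiv.piCongrLeft (fun _ : Fin (n + k) => X) finSumFinEquiv).symm c) s
          = c (finSumFinEquiv s) := by
      intro s
      rw [MeasurableEquiv.piCongrLeft, MeasurableEquiv.symm]
      exact Equiv.piCongrLeft_symm_apply (fun _ => X) finSumFinEquiv c s
    refine Prod.ext ?_ ?_ <;> funext t <;>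
      simp only [Function.comp_apply, MeasurableEquiv.coe_sumPiEquivProdPi,
        Equiv.sumPiEquivProdPi_apply, hsymm, finSumFinEquiv_apply_left, finSumFinEquiv_apply_right]
  rw [hfe]
  exact h3.map_eq

lemma aux_last (r : ℕ) :
    Measure.map (fun c : Fin (r + 1) → X => ((fun i : Fin r => c i.castSucc), c (Fin.last r)))
      (Measure.pi fun _ : Fin (r + 1) => m)
      = (Measure.pi fun _ : Fin r => m).prod m := by
  have h := measurePreserving_piFinSuccAbove (fun _ : Fin (r + 1) => m) (Fin.last r)
  have hswap : MeasurePreserving (Prod.swap : X × (Fin r → X) → (Fin r → X) × X)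
      (m.prod (Measure.pi fun _ : Fin r => m)) ((Measure.pi fun _ : Fin r => m).prod m) :=
    Measure.measurePreserving_swap
  have hcomp := hswap.comp h
  have hfe : (fun c : Fin (r + 1) → X => ((fun i : Fin r => c i.castSucc), c (Fin.last r)))
      = (Prod.swap : X × (Fin r → X) → (Fin r → X) × X) ∘
        (MeasurableEquiv.piFinSuccAbove (fun _ : Fin (r + 1) => X) (Fin.last r)) := by
    funext c
    refine Prod.ext ?_ rfl <;>
    · funext i
      simp [MeasurableEquiv.piFinSuccAbove_apply, Fin.removeNth, Fin.succAbove_last, Fin.init]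
  rw [hfe]
  exact hcomp.map_eq

lemma aux_diag_null [NullSingletonClass m] {E : Set (X × X)} (hE : MeasurableSet E)
    (hpure : ∀ᵐ q ∂(m.prod m), q.1 ≠ q.2 →
      0 < m {y : X | ¬(((q.1, y) ∈ E) ↔ ((q.2, y) ∈ E))}) :
    (m.prod m) {q : X × X | q.1 = q.2} = 0 := by
  classical
  set W : Set ((X × X) × X) := {p | ¬(((p.1.1, p.2) ∈ E) ↔ ((p.1.2, p.2) ∈ E))} with hWdef
  have hA : MeasurableSet {p : (X × X) × X | (p.1.1, p.2) ∈ E} :=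
    (measurable_fst.fst.prodMk measurable_snd) hE
  have hB : MeasurableSet {p : (X × X) × X | (p.1.2, p.2) ∈ E} :=
    (measurable_fst.snd.prodMk measurable_snd) hE
  have hWm : MeasurableSet W := by
    have : W = ({p : (X × X) × X | (p.1.1, p.2) ∈ E} \ {p | (p.1.2, p.2) ∈ E})
        ∪ ({p : (X × X) × X | (p.1.2, p.2) ∈ E} \ {p | (p.1.1, p.2) ∈ E}) := by
      ext p
      simp only [hWdef, Set.mem_setOf_eq, Set.mem_union, Set.mem_diff, Set.mem_setOf_eq]
      tauto
    rw [this]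
    exact (hA.diff hB).union (hB.diff hA)
  have hF2 : Measurable fun q : X × X => m (Prod.mk q ⁻¹' W) :=
    measurable_measure_prodMk_left hWm
  set Nq : Set (X × X) := {q | m (Prod.mk q ⁻¹' W) = 0} with hNqdef
  have hNqm : MeasurableSet Nq := hF2 (measurableSet_singleton 0)
  set Z : Set (X × X) := toMeasurable (m.prod m) {q : X × X | ¬(q.1 ≠ q.2 →
      0 < m {y : X | ¬(((q.1, y) ∈ E) ↔ ((q.2, y) ∈ E))})} with hZdef
  have hZ0 : (m.prod m) Z = 0 := by
    rw [hZdef, measure_toMeasurable]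
    exact hpure
  have hZm : MeasurableSet Z := measurableSet_toMeasurable _ _
  have hsub : {q : X × X | q.1 = q.2} ⊆ Nq := by
    intro q hq
    have : Prod.mk q ⁻¹' W = ∅ := by
      ext y
      simp only [hWdef, Set.mem_preimage, Set.mem_setOf_eq, Set.mem_empty_iff_false, iff_false,
        not_not]
      rw [hq]
    simp only [hNqdef, Set.mem_setOf_eq, this, measure_empty]
  have hdsub : Nq \ Z ⊆ {q : X × X | q.1 = q.2} := by
    rintro q ⟨hq1, hq2⟩
    by_contra hne
    refine hq2 (subset_toMeasurable _ _ ?_)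
    intro himp
    have hlt := himp hne
    have h0 : m {y : X | ¬(((q.1, y) ∈ E) ↔ ((q.2, y) ∈ E))} = 0 := hq1
    rw [h0] at hlt
    exact lt_irrefl 0 hlt
  have hNZ : (m.prod m) (Nq \ Z) = 0 := by
    rw [Measure.prod_apply (hNqm.diff hZm)]
    have hz : ∀ a : X, m (Prod.mk a ⁻¹' (Nq \ Z)) = 0 := by
      intro a
      refine measure_mono_null (fun y hy => ?_) (measure_singleton a)
      have := hdsub hy
      simp only [Set.mem_setOf_eq] at this
      simp [this]
    simp only [Set.preimage_diff] at hz
    simp [hz]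
  refine le_antisymm ?_ zero_le
  calc (m.prod m) {q : X × X | q.1 = q.2} ≤ (m.prod m) Nq := measure_mono hsub
    _ ≤ (m.prod m) ((Nq \ Z) ∪ Z) := measure_mono (fun q hq => by
        by_cases h : q ∈ Z
        · exact Or.inr h
        · exact Or.inl ⟨hq, h⟩)
    _ ≤ (m.prod m) (Nq \ Z) + (m.prod m) Z := measure_union_le _ _
    _ ≤ 0 := by rw [hNZ, hZ0, add_zero]

lemma aux_coord_ne {μ : Measure (ℕ → X)}
    (hμ : ∀ L : ℕ, Measure.map (fun x (i : Fin L) => x (i : ℕ)) μ = Measure.pi (fun _ : Fin L => m))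
    (hdiagnull : (m.prod m) {q : X × X | q.1 = q.2} = 0) {a b : ℕ} (hab : a ≠ b) :
    μ {x : ℕ → X | x a = x b} = 0 := by
  classical
  have hσ : Function.Injective (![a, b] : Fin 2 → ℕ) := by
    intro s t h
    fin_cases s <;> fin_cases t <;> simp_all
  have hmap := aux_map_seq m hμ (![a, b] : Fin 2 → ℕ) hσ
  have hg : Measurable fun x : ℕ → X => (x a, x b) :=
    (measurable_pi_apply a).prodMk (measurable_pi_apply b)
  have key : Measure.map (fun x : ℕ → X => (x a, x b)) μ = m.prod m := by
    refine (Measure.prod_eq fun s t hs ht => ?_).symm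
    rw [Measure.map_apply hg (hs.prod ht)]
    have hmeasst : ∀ i : Fin 2, MeasurableSet (![s, t] i) := by
      intro i; fin_cases i <;> simpa
    have hpre : (fun x : ℕ → X => (x a, x b)) ⁻¹' (s ×ˢ t)
        = (fun (x : ℕ → X) (u : Fin 2) => x ((![a, b] : Fin 2 → ℕ) u)) ⁻¹' (Set.pi univ ![s, t]) := by
      ext x
      simp [Fin.forall_fin_two]
    have hmσ : Measurable fun (x : ℕ → X) (u : Fin 2) => x ((![a, b] : Fin 2 → ℕ) u) :=
      measurable_pi_lambda _ fun u => measurable_pi_apply _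
    rw [hpre, ← Measure.map_apply hmσ (MeasurableSet.univ_pi hmeasst), hmap, Measure.pi_pi]
    simp [Fin.prod_univ_two]
  have hsubset : {x : ℕ → X | x a = x b}
      = (fun x : ℕ → X => (x a, x b)) ⁻¹' {q : X × X | q.1 = q.2} := rfl
  rw [hsubset]
  refine le_antisymm ?_ zero_le
  calc μ ((fun x : ℕ → X => (x a, x b)) ⁻¹' {q : X × X | q.1 = q.2})
      ≤ (Measure.map (fun x : ℕ → X => (x a, x b)) μ) {q : X × X | q.1 = q.2} :=
        Measure.le_map_apply hg.aemeasurable _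
    _ = 0 := by rw [key, hdiagnull]

end Aux

theorem measurable_universal_gives_positive_intersections
    {X : Type*} [MeasurableSpace X] (m : Measure X) [IsProbabilityMeasure m] [NullSingletonClass m]
    (E : Set (X × X)) (hE : MeasurableSet E)
    (hsym : ∀ x y : X, (x, y) ∈ E → (y, x) ∈ E) (hdiag : ∀ x : X, (x, x) ∉ E)
    -- purity: x ↦ E_x is injective mod 0
    (hpure : ∀ᵐ q ∂(m.prod m), q.1 ≠ q.2 →
      0 < m {y : X | ¬(((q.1, y) ∈ E) ↔ ((q.2, y) ∈ E))})
    (μ : Measure (ℕ → X)) (hμ : IsIID m μ)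
    (huniv : ∀ᵐ x ∂μ, ∀ U W : Finset X,
      (↑U ⊆ Set.range x) → (↑W ⊆ Set.range x) → Disjoint U W →
      ∃ v ∈ Set.range x, (∀ u ∈ U, (v, u) ∈ E) ∧ ∀ w ∈ W, (v, w) ∉ E) :
    ∀ n k : ℕ, 0 < n → 0 < k →
      ∀ᵐ q ∂((Measure.pi (fun _ : Fin n => m)).prod (Measure.pi (fun _ : Fin k => m))),
        (∀ i j, q.1 i ≠ q.2 j) →
        0 < m {z : X | (∀ i, (q.1 i, z) ∈ E) ∧ ∀ j, (q.2 j, z) ∉ E} := by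
  classical
  intro n k hn hk
  have hmarg := hμ.2
  have hdiagnull := aux_diag_null m hE hpure
  -- the global measurable set of "good extensions"
  set S : Set ((((Fin n → X) × (Fin k → X))) × X) :=
    {p | (∀ i, (p.1.1 i, p.2) ∈ E) ∧ ∀ j, (p.1.2 j, p.2) ∉ E} with hSdef
  have hSmeas : MeasurableSet S := by
    have h1 : MeasurableSet {p : ((Fin n → X) × (Fin k → X)) × X | ∀ i, (p.1.1 i, p.2) ∈ E} := by
      rw [Set.setOf_forall]
      exact MeasurableSet.iInter fun i =>
        (((measurable_pi_apply i).comp measurable_fst.fst).prodMk measurable_snd) hE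
    have h2 : MeasurableSet {p : ((Fin n → X) × (Fin k → X)) × X | ∀ j, (p.1.2 j, p.2) ∉ E} := by
      rw [Set.setOf_forall]
      refine MeasurableSet.iInter fun j => ?_
      have : {p : ((Fin n → X) × (Fin k → X)) × X | (p.1.2 j, p.2) ∉ E}
          = (fun p : ((Fin n → X) × (Fin k → X)) × X => (p.1.2 j, p.2)) ⁻¹' Eᶜ := rfl
      rw [this]
      exact (((measurable_pi_apply j).comp measurable_fst.snd).prodMk measurable_snd) hE.compl
    exact h1.inter h2
  have hF : Measurable fun q : (Fin n → X) × (Fin k → X) => m (Prod.mk q ⁻¹' S) :=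
    measurable_measure_prodMk_left hSmeas
  have hmeas0 : MeasurableSet {q : (Fin n → X) × (Fin k → X) | m (Prod.mk q ⁻¹' S) = 0} :=
    hF (measurableSet_singleton 0)
  suffices hbad :
      ((Measure.pi (fun _ : Fin n => m)).prod (Measure.pi (fun _ : Fin k => m)))
        {q : (Fin n → X) × (Fin k → X) | m (Prod.mk q ⁻¹' S) = 0} = 0 by
    have hae := measure_eq_zero_iff_ae_notMem.mp hbad
    filter_upwards [hae] with q hq _
    have hne : m {z : X | (∀ i, (q.1 i, z) ∈ E) ∧ ∀ j, (q.2 j, z) ∉ E} ≠ 0 := hq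
    exact pos_iff_ne_zero.mpr hne
  -- transfer to the sequence space
  set Θ : (Fin (n + k) → X) → (Fin n → X) × (Fin k → X) :=
    fun c => ((fun i : Fin n => c (Fin.castAdd k i)), (fun j : Fin k => c (Fin.natAdd n j)))
    with hΘdef
  have hΘmeas : Measurable Θ :=
    (measurable_pi_lambda _ fun i => measurable_pi_apply _).prodMk
      (measurable_pi_lambda _ fun j => measurable_pi_apply _)
  have hres : Measurable fun (x : ℕ → X) (i : Fin (n + k)) => x (i : ℕ) :=
    measurable_pi_lambda _ fun i => measurable_pi_apply _
  rw [← aux_theta m n k, Measure.map_apply hΘmeas hmeas0, ← hmarg (n + k),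
    Measure.map_apply hres (hΘmeas hmeas0)]
  -- notation for the section set as a function of the sequence
  set Sx : (ℕ → X) → Set X :=
    fun x => Prod.mk (Θ (fun i : Fin (n + k) => x (i : ℕ))) ⁻¹' S with hSxdef
  show μ {x : ℕ → X | m (Sx x) = 0} = 0
  -- membership in Sx, in concrete terms
  have hSmem : ∀ (x : ℕ → X) (z : X), z ∈ Sx x ↔
      ((∀ i : Fin n, (x (i : ℕ), z) ∈ E) ∧ ∀ j : Fin k, (x (n + (j : ℕ)), z) ∉ E) :=
    fun x z => Iff.rfl
  set N : ℕ := n + k + k with hN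
  -- the combinatorial core
  have hcore : ∀ x : ℕ → X,
      (∀ U W : Finset X, (↑U ⊆ Set.range x) → (↑W ⊆ Set.range x) → Disjoint U W →
        ∃ v ∈ Set.range x, (∀ u ∈ U, (v, u) ∈ E) ∧ ∀ w ∈ W, (v, w) ∉ E) →
      (∀ a b : Fin N, (a : ℕ) ≠ (b : ℕ) → x (a : ℕ) ≠ x (b : ℕ)) →
      ∃ l, n + k ≤ l ∧ x l ∈ Sx x := by
    intro x hx1 hx2
    by_contra hno
    push_neg at hno
    have hdist : ∀ a b : ℕ, a < N → b < N → a ≠ b → x a ≠ x b :=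
      fun a b ha hb hab => hx2 ⟨a, ha⟩ ⟨b, hb⟩ hab
    have hmain : ∀ T : Finset (Fin k), ∃ j : Fin k,
        ∀ t : Fin k, t ∈ T ↔ (x (n + (j : ℕ)), x (n + k + (t : ℕ))) ∈ E := by
      intro T
      set U : Finset X := (Finset.univ.image fun i : Fin n => x (i : ℕ)) ∪
        (T.image fun t : Fin k => x (n + k + (t : ℕ))) with hU
      set W : Finset X := (Finset.univ.image fun j : Fin k => x (n + (j : ℕ))) ∪
        (Tᶜ.image fun t : Fin k => x (n + k + (t : ℕ))) with hW
      have hUr : ↑U ⊆ Set.range x := by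
        intro v hv
        simp only [hU, Finset.coe_union, Set.mem_union, Finset.coe_image, Set.mem_image,
          Finset.mem_coe, Finset.mem_univ, Finset.coe_univ, Set.mem_univ, true_and] at hv
        rcases hv with ⟨i, _, rfl⟩ | ⟨t, _, rfl⟩ <;> exact ⟨_, rfl⟩
      have hWr : ↑W ⊆ Set.range x := by
        intro v hv
        simp only [hW, Finset.coe_union, Set.mem_union, Finset.coe_image, Set.mem_image,
          Finset.mem_coe, Finset.mem_univ, Finset.coe_univ, Set.mem_univ, true_and] at hv
        rcases hv with ⟨j, _, rfl⟩ | ⟨t, _, rfl⟩ <;> exact ⟨_, rfl⟩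
      have hdisj : Disjoint U W := by
        rw [Finset.disjoint_left]
        intro v hvU hvW
        simp only [hU, hW, Finset.mem_union, Finset.mem_image, Finset.mem_univ, true_and,
          Finset.mem_compl] at hvU hvW
        rcases hvU with ⟨i, rfl⟩ | ⟨t, htT, rfl⟩
        · rcases hvW with ⟨j, hj⟩ | ⟨t, htT, ht⟩
          · exact hdist (n + (j : ℕ)) (i : ℕ) (by omega) (by omega) (by omega) hj
          · exact hdist (n + k + (t : ℕ)) (i : ℕ) (by omega) (by omega) (by omega) ht
        · rcases hvW with ⟨j, hj⟩ | ⟨s, hsT, hs⟩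
          · exact hdist (n + (j : ℕ)) (n + k + (t : ℕ)) (by omega) (by omega) (by omega) hj
          · have hts : t ≠ s := fun h => hsT (h ▸ htT)
            exact hdist (n + k + (s : ℕ)) (n + k + (t : ℕ)) (by omega) (by omega)
              (fun h => hts (Fin.val_injective (by omega)).symm) hs
      obtain ⟨v, ⟨l, rfl⟩, hadj, hnon⟩ := hx1 U W hUr hWr hdisj
      have hvS : x l ∈ Sx x := by
        rw [hSmem]
        constructor
        · intro i
          refine hsym _ _ (hadj _ ?_)
          simp only [hU, Finset.mem_union, Finset.mem_image, Finset.mem_univ, true_and]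
          exact Or.inl ⟨i, rfl⟩
        · intro j hj
          refine hnon (x (n + (j : ℕ))) ?_ (hsym _ _ hj)
          simp only [hW, Finset.mem_union, Finset.mem_image, Finset.mem_univ, true_and]
          exact Or.inl ⟨j, rfl⟩
      have hl2 : l < n + k := by
        by_contra h
        exact hno l (by omega) hvS
      have hl3 : ¬ l < n := by
        intro h
        exact hdiag _ (((hSmem x (x l)).mp hvS).1 ⟨l, h⟩)
      refine ⟨⟨l - n, by omega⟩, fun t => ?_⟩
      have hxj : n + ((⟨l - n, by omega⟩ : Fin k) : ℕ) = l := by simp; omega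
      rw [hxj]
      constructor
      · intro htT
        refine hadj _ ?_
        simp only [hU, Finset.mem_union, Finset.mem_image, Finset.mem_univ, true_and]
        exact Or.inr ⟨t, htT, rfl⟩
      · intro hE'
        by_contra htT
        refine hnon _ ?_ hE'
        simp only [hW, Finset.mem_union, Finset.mem_image, Finset.mem_univ, true_and,
          Finset.mem_compl]
        exact Or.inr ⟨t, htT, rfl⟩
    choose jf hjf using hmain
    have hinj : Function.Injective jf := by
      intro T T' h
      ext t
      rw [hjf T t, h, ← hjf T' t]
    have hcard := Fintype.card_le_of_injective jf hinj
    simp only [Fintype.card_finset, Fintype.card_fin] at hcard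
    exact absurd hcard (Nat.not_le.mpr (Nat.lt_two_pow_self (n := k)))
  -- the key Fubini estimate
  have hkey : ∀ l : ℕ, n + k ≤ l → μ {x : ℕ → X | m (Sx x) = 0 ∧ x l ∈ Sx x} = 0 := by
    intro l hl
    set σ : Fin (n + k + 1) → ℕ := fun t => if (t : ℕ) < n + k then (t : ℕ) else l with hσdef
    have hσinj : Function.Injective σ := by
      intro s t h
      simp only [hσdef] at h
      split_ifs at h with h1 h2 h2
      · exact Fin.val_injective h
      · exact absurd h (by omega)
      · exact absurd h (by omega)
      · refine Fin.val_injective ?_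
        have hs := s.isLt
        have ht := t.isLt
        omega
    set Ψ : (Fin (n + k + 1) → X) → (Fin (n + k) → X) :=
      fun c => fun i : Fin (n + k) => c i.castSucc with hΨdef
    have hΨmeas : Measurable Ψ := measurable_pi_lambda _ fun i => measurable_pi_apply _
    set D2 : Set ((Fin (n + k) → X) × X) :=
      {p | m (Prod.mk (Θ p.1) ⁻¹' S) = 0 ∧ p.2 ∈ Prod.mk (Θ p.1) ⁻¹' S} with hD2def
    have hD2meas : MeasurableSet D2 := by
      have hc1 : MeasurableSet {p : (Fin (n + k) → X) × X | m (Prod.mk (Θ p.1) ⁻¹' S) = 0} :=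
        ((hF.comp (hΘmeas.comp measurable_fst)) (measurableSet_singleton 0))
      have hc2 : MeasurableSet {p : (Fin (n + k) → X) × X | p.2 ∈ Prod.mk (Θ p.1) ⁻¹' S} := by
        have : {p : (Fin (n + k) → X) × X | p.2 ∈ Prod.mk (Θ p.1) ⁻¹' S}
            = (fun p : (Fin (n + k) → X) × X => (Θ p.1, p.2)) ⁻¹' S := rfl
        rw [this]
        exact ((hΘmeas.comp measurable_fst).prodMk measurable_snd) hSmeas
      exact hc1.inter hc2
    set D : Set (Fin (n + k + 1) → X) :=
      (fun c : Fin (n + k + 1) → X => ((fun i : Fin (n + k) => c i.castSucc), c (Fin.last (n + k))))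
        ⁻¹' D2 with hDdef
    have hsplitmeas :
        Measurable fun c : Fin (n + k + 1) → X =>
          ((fun i : Fin (n + k) => c i.castSucc), c (Fin.last (n + k))) :=
      (measurable_pi_lambda _ fun i => measurable_pi_apply _).prodMk (measurable_pi_apply _)
    have hDmeas : MeasurableSet D := hsplitmeas hD2meas
    have hmσ : Measurable fun (x : ℕ → X) (t : Fin (n + k + 1)) => x (σ t) :=
      measurable_pi_lambda _ fun t => measurable_pi_apply _
    have hset : {x : ℕ → X | m (Sx x) = 0 ∧ x l ∈ Sx x}
        = (fun (x : ℕ → X) (t : Fin (n + k + 1)) => x (σ t)) ⁻¹' D := by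
      ext x
      have hrest : (fun i : Fin (n + k) => (fun t : Fin (n + k + 1) => x (σ t)) i.castSucc)
          = fun i : Fin (n + k) => x (i : ℕ) := by
        funext i
        have : ((i.castSucc : Fin (n + k + 1)) : ℕ) = (i : ℕ) := rfl
        simp only [hσdef, this, if_pos i.isLt]
      have hlast : (fun t : Fin (n + k + 1) => x (σ t)) (Fin.last (n + k)) = x l := by
        simp [hσdef]
      simp only [Set.mem_setOf_eq, Set.mem_preimage, hDdef, hD2def, hrest, hlast, hSxdef]
    rw [hset, ← Measure.map_apply hmσ hDmeas, aux_map_seq m hmarg σ hσinj, hDdef,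
      ← Measure.map_apply hsplitmeas hD2meas, aux_last m (n + k)]
    refine aux_fubini_zero m _ D2 hD2meas fun q => ?_
    by_cases h0 : m (Prod.mk (Θ q) ⁻¹' S) = 0
    · exact measure_mono_null (fun z hz => hz.2) h0
    · have : Prod.mk q ⁻¹' D2 = ∅ := by
        ext z
        simp [hD2def, h0]
      simp [this]
  -- assemble
  have hA1 : μ {x : ℕ → X | ¬ ∀ U W : Finset X,
      (↑U ⊆ Set.range x) → (↑W ⊆ Set.range x) → Disjoint U W →
      ∃ v ∈ Set.range x, (∀ u ∈ U, (v, u) ∈ E) ∧ ∀ w ∈ W, (v, w) ∉ E} = 0 :=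
    ae_iff.mp huniv
  have hA2 : μ {x : ℕ → X |
      ¬ ∀ a b : Fin N, (a : ℕ) ≠ (b : ℕ) → x (a : ℕ) ≠ x (b : ℕ)} = 0 := by
    have hsub : {x : ℕ → X | ¬ ∀ a b : Fin N, (a : ℕ) ≠ (b : ℕ) → x (a : ℕ) ≠ x (b : ℕ)}
        ⊆ ⋃ (a : Fin N) (b : Fin N), {x : ℕ → X | (a : ℕ) ≠ (b : ℕ) ∧ x (a : ℕ) = x (b : ℕ)} := by
      intro x hx
      simp only [Set.mem_setOf_eq, not_forall] at hx
      obtain ⟨a, b, hab, hxab⟩ := hx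
      exact Set.mem_iUnion.mpr ⟨a, Set.mem_iUnion.mpr ⟨b, hab, of_not_not hxab⟩⟩
    refine measure_mono_null hsub (measure_iUnion_null fun a => measure_iUnion_null fun b => ?_)
    by_cases hab : (a : ℕ) = (b : ℕ)
    · have : {x : ℕ → X | (a : ℕ) ≠ (b : ℕ) ∧ x (a : ℕ) = x (b : ℕ)} = ∅ := by
        ext x; simp [hab]
      simp [this]
    · exact measure_mono_null (fun x hx => hx.2)
        (aux_coord_ne m hmarg hdiagnull hab)
  have hsub : {x : ℕ → X | m (Sx x) = 0} ⊆
      {x : ℕ → X | ¬ ∀ U W : Finset X,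
        (↑U ⊆ Set.range x) → (↑W ⊆ Set.range x) → Disjoint U W →
        ∃ v ∈ Set.range x, (∀ u ∈ U, (v, u) ∈ E) ∧ ∀ w ∈ W, (v, w) ∉ E}
      ∪ {x : ℕ → X | ¬ ∀ a b : Fin N, (a : ℕ) ≠ (b : ℕ) → x (a : ℕ) ≠ x (b : ℕ)}
      ∪ ⋃ l : ℕ, {x : ℕ → X | n + k ≤ l ∧ (m (Sx x) = 0 ∧ x l ∈ Sx x)} := by
    intro x hx
    by_cases h1 : ∀ U W : Finset X,
        (↑U ⊆ Set.range x) → (↑W ⊆ Set.range x) → Disjoint U W →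
        ∃ v ∈ Set.range x, (∀ u ∈ U, (v, u) ∈ E) ∧ ∀ w ∈ W, (v, w) ∉ E
    · by_cases h2 : ∀ a b : Fin N, (a : ℕ) ≠ (b : ℕ) → x (a : ℕ) ≠ x (b : ℕ)
      · obtain ⟨l, hl, hxl⟩ := hcore x h1 h2
        exact Or.inr (Set.mem_iUnion.mpr ⟨l, hl, hx, hxl⟩)
      · exact Or.inl (Or.inr h2)
    · exact Or.inl (Or.inl h1)
  refine measure_mono_null hsub
    (measure_union_null (measure_union_null hA1 hA2) (measure_iUnion_null fun l => ?_))
  by_cases hl : n + k ≤ l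
  · exact measure_mono_null (fun x hx => hx.2) (hkey l hl)
  · have : {x : ℕ → X | n + k ≤ l ∧ (m (Sx x) = 0 ∧ x l ∈ Sx x)} = ∅ := by
      ext x; simp [hl]
    simp [this]
end

section
/- Let (X, E) be a topologically universal K_s-free graph on a Polish space X (s ≥ 3): X contains no s points pairwise joined by E, and for all disjoint finite sets {x₁,…,x_k}, {y₁,…,y_t} with the induced graph on {x₁,…,x_k} being K_{s−1}-free, the set ⋂ᵢ E_{xᵢ} ∩ ⋂ⱼ (X \ E_{yⱼ}) has nonempty interior. Then for every nondegenerate Borel probability measure m on X, for m^∞-almost every i.i.d. sequence (x_k), the induced countable graph on {x_k} is K_s-free and satisfies the K_s-free extension property. -/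
open MeasureTheory ENNReal

lemma aux_prod_bound {X : Type*} [MeasurableSpace X] (m : Measure X) [IsProbabilityMeasure m]
    (N n : ℕ) (T : Set ((Fin N → X) × X)) (hT : MeasurableSet T) (ε : ℝ≥0∞) :
    ((Measure.pi fun _ : Fin N => m).prod (Measure.pi fun _ : Fin n => m))
      {p : (Fin N → X) × (Fin n → X) |
        ε ≤ m {z | (p.1, z) ∈ T} ∧ ∀ k : Fin n, (p.1, p.2 k) ∉ T} ≤ (1 - ε) ^ n := by
  have hmeas : Measurable fun u : Fin N → X => m {z | (u, z) ∈ T} := by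
    exact measurable_measure_prodMk_left hT
  have hD : MeasurableSet {p : (Fin N → X) × (Fin n → X) |
      ε ≤ m {z | (p.1, z) ∈ T} ∧ ∀ k : Fin n, (p.1, p.2 k) ∉ T} := by
    have h1 : MeasurableSet {p : (Fin N → X) × (Fin n → X) | ε ≤ m {z | (p.1, z) ∈ T}} :=
      (hmeas.comp measurable_fst) measurableSet_Ici
    have h2 : MeasurableSet {p : (Fin N → X) × (Fin n → X) | ∀ k : Fin n, (p.1, p.2 k) ∉ T} := by
      have heq : {p : (Fin N → X) × (Fin n → X) | ∀ k : Fin n, (p.1, p.2 k) ∉ T}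
          = ⋂ k : Fin n, {p | (p.1, p.2 k) ∈ Tᶜ} := by ext p; simp
      rw [heq]
      exact MeasurableSet.iInter fun k => (hT.compl.preimage
        ((measurable_fst).prodMk ((measurable_pi_apply k).comp measurable_snd)))
    exact h1.inter h2
  rw [Measure.prod_apply hD]
  calc ∫⁻ u, (Measure.pi fun _ : Fin n => m)
        (Prod.mk u ⁻¹' {p : (Fin N → X) × (Fin n → X) |
          ε ≤ m {z | (p.1, z) ∈ T} ∧ ∀ k : Fin n, (p.1, p.2 k) ∉ T}) ∂(Measure.pi fun _ : Fin N => m)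
      ≤ ∫⁻ _, (1 - ε) ^ n ∂(Measure.pi fun _ : Fin N => m) := by
        apply lintegral_mono
        intro u
        dsimp only
        by_cases h : ε ≤ m {z | (u, z) ∈ T}
        · have hsec : Prod.mk u ⁻¹' {p : (Fin N → X) × (Fin n → X) |
              ε ≤ m {z | (p.1, z) ∈ T} ∧ ∀ k : Fin n, (p.1, p.2 k) ∉ T}
              = Set.pi Set.univ (fun _ : Fin n => {z | (u, z) ∈ T}ᶜ) := by
            ext v
            simp [h, Set.mem_pi]
          rw [hsec, Measure.pi_pi]
          have hGu : MeasurableSet {z | (u, z) ∈ T} := hT.preimage measurable_prodMk_left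
          have : m ({z | (u, z) ∈ T}ᶜ) = 1 - m {z | (u, z) ∈ T} := by
            rw [measure_compl hGu (measure_ne_top m _), measure_univ]
          rw [Finset.prod_const, Finset.card_univ, Fintype.card_fin, this]
          exact pow_le_pow_left' (tsub_le_tsub_left h 1) n
        · have hsec : Prod.mk u ⁻¹' {p : (Fin N → X) × (Fin n → X) |
              ε ≤ m {z | (p.1, z) ∈ T} ∧ ∀ k : Fin n, (p.1, p.2 k) ∉ T} = ∅ := by
            ext v; simp [h]
          rw [hsec]; simp
    _ = (1 - ε) ^ n := by rw [lintegral_const, measure_univ, mul_one]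

def Fset {X : Type*} (E : Set (X × X)) (A B : Finset ℕ) (x : ℕ → X) : Set X :=
  {z | (∀ i ∈ A, (x i, z) ∈ E) ∧ ∀ j ∈ B, (x j, z) ∉ E}

lemma Fset_congr {X : Type*} (E : Set (X × X)) (A B : Finset ℕ) {x y : ℕ → X}
    (h : ∀ i ∈ A ∪ B, x i = y i) : Fset E A B x = Fset E A B y := by
  unfold Fset
  ext z
  constructor <;> rintro ⟨h1, h2⟩ <;> refine ⟨fun i hi => ?_, fun j hj => ?_⟩
  · rw [← h i (Finset.mem_union_left _ hi)]; exact h1 i hi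
  · rw [← h j (Finset.mem_union_right _ hj)]; exact h2 j hj
  · rw [h i (Finset.mem_union_left _ hi)]; exact h1 i hi
  · rw [h j (Finset.mem_union_right _ hj)]; exact h2 j hj

lemma bad_null {X : Type*} [MeasurableSpace X] (m : Measure X) [IsProbabilityMeasure m]
    (μ : Measure (ℕ → X)) (hμ : IsIID m μ) (E : Set (X × X)) (hE : MeasurableSet E)
    (A B : Finset ℕ) (ε : ENNReal) (hε : 0 < ε) :
    μ {x : ℕ → X | ε ≤ m (Fset E A B x) ∧ ∀ k : ℕ, x k ∉ Fset E A B x} = 0 := by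
  have hX : Nonempty X := by
    by_contra h
    rw [not_nonempty_iff] at h
    have h1 : m Set.univ = 1 := measure_univ
    rw [Set.univ_eq_empty_iff.2 h, measure_empty] at h1
    exact zero_ne_one h1
  obtain ⟨x₀⟩ := hX
  set N : ℕ := (A ∪ B).sup id + 1 with hN
  have hlt : ∀ i ∈ A ∪ B, i < N := fun i hi =>
    Nat.lt_succ_of_le (Finset.le_sup (f := id) hi)
  -- extension map
  set ext : (Fin N → X) → (ℕ → X) := fun u i => if h : i < N then u ⟨i, h⟩ else x₀ with hext
  have hextmeas : Measurable ext := by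
    apply measurable_pi_lambda
    intro i
    by_cases h : i < N
    · simp only [hext, h, dif_pos]
      exact measurable_pi_apply _
    · simp only [hext, h, dif_neg, not_false_iff]
      exact measurable_const
  set T : Set ((Fin N → X) × X) := {p | p.2 ∈ Fset E A B (ext p.1)} with hTdef
  have hT : MeasurableSet T := by
    have : T = (⋂ i ∈ A, {p : (Fin N → X) × X | (ext p.1 i, p.2) ∈ E}) ∩
        ⋂ j ∈ B, {p : (Fin N → X) × X | (ext p.1 j, p.2) ∈ E}ᶜ := by
      ext p; simp [hTdef, Fset]
    rw [this]
    have hco : ∀ i : ℕ, MeasurableSet {p : (Fin N → X) × X | (ext p.1 i, p.2) ∈ E} :=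
      fun i => hE.preimage
        ((((measurable_pi_apply i).comp hextmeas).comp measurable_fst).prodMk measurable_snd)
    exact ((MeasurableSet.biInter A.countable_toSet fun i _ => hco i).inter
      (MeasurableSet.biInter B.countable_toSet fun j _ => (hco j).compl))
  have key : ∀ n : ℕ, μ {x : ℕ → X | ε ≤ m (Fset E A B x) ∧ ∀ k : ℕ, x k ∉ Fset E A B x}
      ≤ (1 - ε) ^ n := by
    intro n
    -- the measurable equiv
    set φ : (Fin (N + n) → X) ≃ᵐ (Fin N → X) × (Fin n → X) :=
      (MeasurableEquiv.piCongrLeft (fun _ => X) finSumFinEquiv).symm.trans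
        (MeasurableEquiv.sumPiEquivProdPi (fun _ : Fin N ⊕ Fin n => X)) with hφ
    have hφ1 : ∀ (y : Fin (N + n) → X) (i : Fin N), (φ y).1 i = y (Fin.castAdd n i) := by
      intro y i
      simp [hφ, MeasurableEquiv.sumPiEquivProdPi, MeasurableEquiv.piCongrLeft,
        Equiv.sumPiEquivProdPi, Equiv.piCongrLeft, Equiv.piCongrLeft', MeasurableEquiv.trans]
    have hφ2 : ∀ (y : Fin (N + n) → X) (k : Fin n), (φ y).2 k = y (Fin.natAdd N k) := by
      intro y k
      simp [hφ, MeasurableEquiv.sumPiEquivProdPi, MeasurableEquiv.piCongrLeft,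
        Equiv.sumPiEquivProdPi, Equiv.piCongrLeft, Equiv.piCongrLeft', MeasurableEquiv.trans]
    have hφpres : MeasurePreserving φ (Measure.pi fun _ : Fin (N + n) => m)
        ((Measure.pi fun _ : Fin N => m).prod (Measure.pi fun _ : Fin n => m)) :=
      (measurePreserving_sumPiEquivProdPi (fun _ : Fin N ⊕ Fin n => m)).comp
        (measurePreserving_piCongrLeft (fun _ : Fin (N + n) => m) finSumFinEquiv).symm
    set D' : Set ((Fin N → X) × (Fin n → X)) :=
      {p | ε ≤ m {z | (p.1, z) ∈ T} ∧ ∀ k : Fin n, (p.1, p.2 k) ∉ T} with hD'def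
    have hmeasf : Measurable fun u : Fin N → X => m {z | (u, z) ∈ T} :=
      measurable_measure_prodMk_left hT
    have hD' : MeasurableSet D' := by
      have h1 : MeasurableSet {p : (Fin N → X) × (Fin n → X) | ε ≤ m {z | (p.1, z) ∈ T}} :=
        (hmeasf.comp measurable_fst) measurableSet_Ici
      have h2 : MeasurableSet {p : (Fin N → X) × (Fin n → X) | ∀ k : Fin n, (p.1, p.2 k) ∉ T} := by
        have heq : {p : (Fin N → X) × (Fin n → X) | ∀ k : Fin n, (p.1, p.2 k) ∉ T}
            = ⋂ k : Fin n, {p | (p.1, p.2 k) ∈ Tᶜ} := by ext p; simp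
        rw [heq]
        exact MeasurableSet.iInter fun k => (hT.compl.preimage
          ((measurable_fst).prodMk ((measurable_pi_apply k).comp measurable_snd)))
      exact h1.inter h2
    set π : (ℕ → X) → (Fin (N + n) → X) := fun x (i : Fin (N + n)) => x (i : ℕ) with hπdef
    have hπ : Measurable π := measurable_pi_lambda _ fun i => measurable_pi_apply _
    -- key coordinate fact
    have hsect : ∀ x : ℕ → X, {z | ((φ (π x)).1, z) ∈ T} = Fset E A B x := by
      intro x
      have : ext (φ (π x)).1 = fun i => if h : i < N then x i else x₀ := by
        funext i
        by_cases h : i < N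
        · simp only [hext, h, dif_pos]
          rw [hφ1]
          rfl
        · simp only [hext, h, dif_neg, not_false_iff]
      have hc : Fset E A B (ext (φ (π x)).1) = Fset E A B x := by
        apply Fset_congr
        intro i hi
        rw [this]
        simp [hlt i hi]
      ext z
      simp only [hTdef, Set.mem_setOf_eq]
      rw [hc]
    have hsubset : {x : ℕ → X | ε ≤ m (Fset E A B x) ∧ ∀ k : ℕ, x k ∉ Fset E A B x}
        ⊆ π ⁻¹' (φ ⁻¹' D') := by
      intro x hx
      simp only [Set.mem_preimage, hD'def, Set.mem_setOf_eq]
      constructor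
      · rw [hsect x]; exact hx.1
      · intro k
        simp only [hTdef, Set.mem_setOf_eq]
        rw [show ((φ (π x)).1, (φ (π x)).2 k).2 ∈ Fset E A B (ext ((φ (π x)).1, (φ (π x)).2 k).1)
            ↔ (φ (π x)).2 k ∈ Fset E A B (ext (φ (π x)).1) from Iff.rfl]
        have h2 : (φ (π x)).2 k = x (N + k) := by
          rw [hφ2]; rfl
        rw [h2]
        intro hcon
        have := hsect x
        have hFeq : Fset E A B (ext (φ (π x)).1) = Fset E A B x := by
          ext z
          have := congrArg (fun S => z ∈ S) (hsect x)
          simpa [hTdef] using this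
        rw [hFeq] at hcon
        exact hx.2 (N + k) hcon
    calc μ {x : ℕ → X | ε ≤ m (Fset E A B x) ∧ ∀ k : ℕ, x k ∉ Fset E A B x}
        ≤ μ (π ⁻¹' (φ ⁻¹' D')) := measure_mono hsubset
      _ = (Measure.map π μ) (φ ⁻¹' D') := (Measure.map_apply hπ (φ.measurable hD')).symm
      _ = (Measure.pi fun _ : Fin (N + n) => m) (φ ⁻¹' D') := by rw [hμ.2 (N + n)]
      _ = ((Measure.pi fun _ : Fin N => m).prod (Measure.pi fun _ : Fin n => m)) D' :=
          hφpres.measure_preimage hD'.nullMeasurableSet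
      _ ≤ (1 - ε) ^ n := aux_prod_bound m N n T hT ε
  have h0 : Filter.Tendsto (fun n : ℕ => (1 - ε) ^ n) Filter.atTop (nhds 0) :=
    ENNReal.tendsto_pow_atTop_nhds_zero_of_lt_one
      (ENNReal.sub_lt_self one_ne_top one_ne_zero hε.ne')
  exact le_antisymm (ge_of_tendsto' h0 key) zero_le

theorem topologically_universal_ks_free_gives_random_ks_free
    {X : Type*} [TopologicalSpace X] [PolishSpace X] [MeasurableSpace X] [BorelSpace X]
    (s : ℕ) (hs : 3 ≤ s)
    (E : Set (X × X)) (hEclosed : IsClosed E)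
    (hsym : ∀ x y : X, (x, y) ∈ E → (y, x) ∈ E) (hdiag : ∀ x : X, (x, x) ∉ E)
    (hfree : ¬ ∃ f : Fin s → X, ∀ i j, i ≠ j → (f i, f j) ∈ E)
    (huniv : ∀ U W : Finset X, Disjoint U W →
      (¬ ∃ f : Fin (s - 1) → X, Function.Injective f ∧ (∀ i, f i ∈ U) ∧
        ∀ i j, i ≠ j → (f i, f j) ∈ E) →
      (interior {z : X | (∀ u ∈ U, (u, z) ∈ E) ∧ ∀ w ∈ W, (w, z) ∉ E}).Nonempty)
    (m : Measure X) [IsProbabilityMeasure m]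
    (hm : ∀ O : Set X, IsOpen O → O.Nonempty → 0 < m O)
    (μ : Measure (ℕ → X)) (hμ : IsIID m μ) :
    ∀ᵐ x ∂μ,
      (¬ ∃ g : Fin s → ℕ, ∀ i j, i ≠ j → (x (g i), x (g j)) ∈ E) ∧
      ∀ U W : Finset X, (↑U ⊆ Set.range x) → (↑W ⊆ Set.range x) → Disjoint U W →
        (¬ ∃ f : Fin (s - 1) → X, Function.Injective f ∧ (∀ i, f i ∈ U) ∧
          ∀ i j, i ≠ j → (f i, f j) ∈ E) →
        ∃ v ∈ Set.range x, (∀ u ∈ U, (v, u) ∈ E) ∧ ∀ w ∈ W, (v, w) ∉ E := by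
  classical
  have hE : MeasurableSet E := hEclosed.measurableSet
  have hae : ∀ᵐ x ∂μ, ∀ (A B : Finset ℕ) (j : ℕ),
      ¬ ((((j : ENNReal) + 1)⁻¹ ≤ m (Fset E A B x)) ∧ ∀ k : ℕ, x k ∉ Fset E A B x) := by
    rw [ae_all_iff]
    intro A
    rw [ae_all_iff]
    intro B
    rw [ae_all_iff]
    intro j
    have := bad_null m μ hμ E hE A B (((j : ENNReal) + 1)⁻¹)
      (ENNReal.inv_pos.2 (by simp [ENNReal.add_ne_top]))
    rw [ae_iff]
    convert this using 2
    ext x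
    simp only [Set.mem_setOf_eq, not_not]
  filter_upwards [hae] with x hx
  constructor
  · rintro ⟨g, hg⟩
    exact hfree ⟨fun i => x (g i), hg⟩
  · intro U W hU hW hdisj hfreeUW
    set f : X → ℕ := fun v => if h : ∃ k, x k = v then h.choose else 0 with hf
    have hxf : ∀ v, v ∈ Set.range x → x (f v) = v := by
      intro v hv
      obtain ⟨k, hk⟩ := hv
      have h : ∃ k, x k = v := ⟨k, hk⟩
      simp only [hf, dif_pos h]
      exact h.choose_spec
    set A := U.image f with hA
    set B := W.image f with hB
    have hxA : ∀ i ∈ A, x i ∈ U := by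
      intro i hi
      obtain ⟨u, hu, rfl⟩ := Finset.mem_image.1 hi
      rw [hxf u (hU hu)]; exact hu
    have hxB : ∀ i ∈ B, x i ∈ W := by
      intro i hi
      obtain ⟨w, hw, rfl⟩ := Finset.mem_image.1 hi
      rw [hxf w (hW hw)]; exact hw
    obtain ⟨z₀, hz₀⟩ := huniv U W hdisj hfreeUW
    have hsub : interior {z : X | (∀ u ∈ U, (u, z) ∈ E) ∧ ∀ w ∈ W, (w, z) ∉ E}
        ⊆ Fset E A B x := by
      refine interior_subset.trans ?_
      rintro z ⟨h1, h2⟩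
      exact ⟨fun i hi => h1 _ (hxA i hi), fun j hj => h2 _ (hxB j hj)⟩
    have hpos : 0 < m (Fset E A B x) :=
      lt_of_lt_of_le (hm _ isOpen_interior ⟨z₀, hz₀⟩) (measure_mono hsub)
    obtain ⟨j, hj⟩ := ENNReal.exists_inv_nat_lt hpos.ne'
    have hj' : ((j : ENNReal) + 1)⁻¹ ≤ m (Fset E A B x) := by
      refine le_trans (ENNReal.inv_le_inv' ?_) hj.le
      exact le_add_of_nonneg_right zero_le_one
    have := hx A B j
    rw [not_and] at this
    have hk := this hj'
    push_neg at hk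
    obtain ⟨k, hk⟩ := hk
    refine ⟨x k, ⟨k, rfl⟩, fun u hu => ?_, fun w hw hvw => ?_⟩
    · have : (x (f u), x k) ∈ E := hk.1 (f u) (Finset.mem_image_of_mem f hu)
      rw [hxf u (hU hu)] at this
      exact hsym _ _ this
    · have h2 : (x (f w), x k) ∉ E := hk.2 (f w) (Finset.mem_image_of_mem f hw)
      rw [hxf w (hW hw)] at h2
      exact h2 (hsym _ _ hvw)
end

section
/- There exists a symmetric closed subset E ⊆ ℝ × ℝ with nonempty interior, disjoint from the diagonal, such that (ℝ, E) is a topologically universal K_s-free graph for given s > 3: no s points of ℝ are pairwise joined by E, and for every pair of disjoint finite sets U, W ⊂ ℝ with the induced graph on U being K_{s−1}-free, the set of points joined to all of U and to none of W has nonempty interior. -/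
open Set

namespace TUG

noncomputable section

abbrev Req := Finset (ℚ × ℚ) × ℚ

instance : Denumerable Req := Denumerable.ofEncodableOfInfinite _

/-- enumeration of requirements -/
noncomputable def req : ℕ ≃ Req := (Denumerable.eqv Req).symm

def iv (p : ℚ × ℚ) : Set ℝ := Icc (p.1 : ℝ) (p.2 : ℝ)

def reqBound (R : Req) : ℝ := (∑ p ∈ R.1, (|(p.1 : ℝ)| + |(p.2 : ℝ)|)) + |(R.2 : ℝ)|

lemma reqBound_nonneg (R : Req) : 0 ≤ reqBound R := by
  refine add_nonneg (Finset.sum_nonneg fun p _ => by positivity) (abs_nonneg _)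

def M (r : ℕ) : ℝ := ∑ i ∈ Finset.range (r + 1), reqBound (req i)

lemma M_nonneg (r : ℕ) : 0 ≤ M r :=
  Finset.sum_nonneg fun i _ => reqBound_nonneg _

lemma M_mono {i r : ℕ} (h : i ≤ r) : M i ≤ M r := by
  refine Finset.sum_le_sum_of_subset_of_nonneg ?_ fun j _ _ => reqBound_nonneg _
  exact Finset.range_subset_range.2 (by omega)

lemma reqBound_le_M {i r : ℕ} (h : i ≤ r) : reqBound (req i) ≤ M r := by
  have := Finset.single_le_sum (f := fun j => reqBound (req j))
    (fun j _ => reqBound_nonneg _) (Finset.mem_range.2 (by omega : i < r + 1))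
  simpa [M] using this

def t (r : ℕ) : ℝ := r + M r + 2

def C (r : ℕ) : Set ℝ := Icc (t r) (t r + 1/2)

def AU (r : ℕ) : Set ℝ := ⋃ p ∈ (req r).1, iv p

def sqr (r : ℕ) : Set (ℝ × ℝ) := ⋃ p ∈ (req r).1, (iv p ×ˢ C r ∪ C r ×ˢ iv p)

lemma iv_bound {p : ℚ × ℚ} {i r : ℕ} (hp : p ∈ (req i).1) (hir : i ≤ r)
    {x : ℝ} (hx : x ∈ iv p) : |x| ≤ M r := by
  have h1 : |(p.1 : ℝ)| + |(p.2 : ℝ)| ≤ reqBound (req i) := by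
    have h0 : |(p.1 : ℝ)| + |(p.2 : ℝ)| ≤ ∑ q ∈ (req i).1, (|(q.1 : ℝ)| + |(q.2 : ℝ)|) := by
      exact Finset.single_le_sum (f := fun q : ℚ × ℚ => |(q.1 : ℝ)| + |(q.2 : ℝ)|)
        (fun q _ => by positivity) hp
    have h2 : (0:ℝ) ≤ |((req i).2 : ℝ)| := abs_nonneg _
    unfold reqBound; linarith
  have h3 := reqBound_le_M hir
  obtain ⟨hl, hr⟩ := hx
  have a1 : -(|(p.1 : ℝ)|) ≤ (p.1 : ℝ) := neg_abs_le _
  have a2 : (p.2 : ℝ) ≤ |(p.2 : ℝ)| := le_abs_self _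
  have b1 : (0:ℝ) ≤ |(p.1 : ℝ)| := abs_nonneg _
  have b2 : (0:ℝ) ≤ |(p.2 : ℝ)| := abs_nonneg _
  rw [abs_le]
  constructor <;> linarith

lemma t_gap {r r' : ℕ} (h : r < r') : t r + 1 ≤ t r' := by
  have h1 : (r : ℝ) + 1 ≤ (r' : ℝ) := by exact_mod_cast Nat.succ_le_of_lt h
  have h2 : M r ≤ M r' := M_mono h.le
  unfold t; linarith

lemma mem_C_lower {r : ℕ} {x : ℝ} (hx : x ∈ C r) : M r + 2 ≤ x := by
  have : (0:ℝ) ≤ r := Nat.cast_nonneg r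
  have := hx.1
  unfold t at this; linarith

lemma C_unique {r r' : ℕ} {x : ℝ} (hx : x ∈ C r) (hx' : x ∈ C r') : r = r' := by
  rcases lt_trichotomy r r' with h | h | h
  · exfalso; have := t_gap h; have := hx.2; have := hx'.1; linarith
  · exact h
  · exfalso; have := t_gap h; have := hx'.2; have := hx.1; linarith

lemma notin_iv_of_mem_C {r i : ℕ} {x : ℝ} (hx : x ∈ C r) (hir : i ≤ r)
    {p : ℚ × ℚ} (hp : p ∈ (req i).1) : x ∉ iv p := by
  intro hxp
  have h1 := iv_bound hp hir hxp
  have h2 := mem_C_lower hx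
  have h3 := le_abs_self x
  linarith

lemma notin_AU_of_mem_C {r i : ℕ} {x : ℝ} (hx : x ∈ C r) (hir : i ≤ r) : x ∉ AU i := by
  intro hxA
  simp only [AU, mem_iUnion, exists_prop] at hxA
  obtain ⟨p, hp, hxp⟩ := hxA
  exact notin_iv_of_mem_C hx hir hp hxp

lemma mem_sqr_iff {r : ℕ} {x y : ℝ} :
    (x, y) ∈ sqr r ↔ ∃ p ∈ (req r).1, (x ∈ iv p ∧ y ∈ C r) ∨ (x ∈ C r ∧ y ∈ iv p) := by
  simp [sqr, Set.mem_prod]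

variable (k : ℕ)

def noClique (G : Set (ℝ × ℝ)) (S : Set ℝ) : Prop :=
  ¬ ∃ g : Fin k → ℝ, (∀ i, g i ∈ S) ∧ ∀ i j, i ≠ j → (g i, g j) ∈ G

def Estage : ℕ → Set (ℝ × ℝ)
  | 0 => ∅
  | r + 1 => Estage r ∪ {x | noClique k (Estage r) (AU r) ∧ x ∈ sqr r}

def qual (r : ℕ) : Prop := noClique k (Estage k r) (AU r)

def Sq (r : ℕ) : Set (ℝ × ℝ) := {x | qual k r ∧ x ∈ sqr r}

def EE : Set (ℝ × ℝ) := ⋃ r, Sq k r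

lemma Estage_succ (r : ℕ) : Estage k (r + 1) = Estage k r ∪ Sq k r := rfl

lemma Estage_mono {r r' : ℕ} (h : r ≤ r') : Estage k r ⊆ Estage k r' := by
  induction h with
  | refl => exact subset_rfl
  | step h ih => exact ih.trans (by rw [Estage_succ]; exact subset_union_left)

lemma Sq_subset_Estage (r : ℕ) : Sq k r ⊆ Estage k (r + 1) := by
  rw [Estage_succ]; exact subset_union_right

lemma Sq_subset_EE (r : ℕ) : Sq k r ⊆ EE k := subset_iUnion (Sq k) r

lemma Estage_subset_EE (r : ℕ) : Estage k r ⊆ EE k := by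
  induction r with
  | zero => simp [Estage]
  | succ n ih => rw [Estage_succ]; exact union_subset ih (Sq_subset_EE k n)

lemma mem_EE_iff {z : ℝ × ℝ} : z ∈ EE k ↔ ∃ r, qual k r ∧ z ∈ sqr r := by
  simp [EE, Sq]

lemma EE_symm {x y : ℝ} (h : (x, y) ∈ EE k) : (y, x) ∈ EE k := by
  rw [mem_EE_iff] at h ⊢
  obtain ⟨r, hq, hs⟩ := h
  refine ⟨r, hq, ?_⟩
  rw [mem_sqr_iff] at hs ⊢
  obtain ⟨p, hp, h | h⟩ := hs
  · exact ⟨p, hp, Or.inr ⟨h.2, h.1⟩⟩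
  · exact ⟨p, hp, Or.inl ⟨h.2, h.1⟩⟩

lemma EE_offdiag (x : ℝ) : (x, x) ∉ EE k := by
  rw [mem_EE_iff]
  rintro ⟨r, _, hs⟩
  rw [mem_sqr_iff] at hs
  obtain ⟨p, hp, h | h⟩ := hs
  · exact notin_iv_of_mem_C h.2 le_rfl hp h.1
  · exact notin_iv_of_mem_C h.1 le_rfl hp h.2

lemma sqr_closed (r : ℕ) : IsClosed (sqr r) := by
  unfold sqr
  refine Set.Finite.isClosed_biUnion (Set.finite_mem_finset _) fun p _ => ?_
  exact (isClosed_Icc.prod isClosed_Icc).union (isClosed_Icc.prod isClosed_Icc)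

lemma Sq_closed (r : ℕ) : IsClosed (Sq k r) := by
  by_cases h : qual k r
  · have : Sq k r = sqr r := by ext z; simp [Sq, h]
    rw [this]; exact sqr_closed r
  · have : Sq k r = ∅ := by ext z; simp [Sq, h]
    rw [this]; exact isClosed_empty

lemma Sq_coord_large {r : ℕ} {z : ℝ × ℝ} (hz : z ∈ Sq k r) : t r ≤ max z.1 z.2 := by
  obtain ⟨-, hs⟩ := hz
  obtain ⟨x, y⟩ := z
  rw [mem_sqr_iff] at hs
  obtain ⟨p, _, h | h⟩ := hs
  · exact le_trans h.2.1 (le_max_right _ _)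
  · exact le_trans h.1.1 (le_max_left _ _)

lemma EE_closed : IsClosed (EE k) := by
  rw [← isOpen_compl_iff, Metric.isOpen_iff]
  intro z hz
  set B : ℝ := max |z.1| |z.2| + 2 with hB
  set N : ℕ := ⌈B⌉₊ with hN
  set F : Set (ℝ × ℝ) := ⋃ r ∈ Finset.range N, Sq k r with hF
  have hFclosed : IsClosed F :=
    Set.Finite.isClosed_biUnion (Finset.range N).finite_toSet fun r _ => Sq_closed k r
  have hzF : z ∉ F := by
    intro hzF
    apply hz
    simp only [hF, mem_iUnion, exists_prop] at hzF
    obtain ⟨r, _, hr⟩ := hzF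
    exact Sq_subset_EE k r hr
  obtain ⟨ε, hε, hball⟩ := Metric.isOpen_iff.1 hFclosed.isOpen_compl z hzF
  refine ⟨min ε 1, lt_min hε one_pos, ?_⟩
  intro w hw
  simp only [Metric.mem_ball] at hw
  intro hwE
  obtain ⟨r, hwr⟩ := mem_iUnion.1 hwE
  rcases lt_or_ge r N with hrN | hrN
  · have : w ∈ F := by
      simp only [hF, mem_iUnion, exists_prop]
      exact ⟨r, Finset.mem_range.2 hrN, hwr⟩
    exact hball (by simp only [Metric.mem_ball]; exact lt_of_lt_of_le hw (min_le_left _ _)) this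
  · have h1 : t r ≤ max w.1 w.2 := Sq_coord_large k hwr
    have h2 : (N : ℝ) ≤ r := Nat.cast_le.2 hrN
    have h3 : B ≤ N := Nat.le_ceil B
    have h4 : (r : ℝ) + 2 ≤ t r := by
      have := M_nonneg r; unfold t; linarith
    have hd : dist w z < 1 := lt_of_lt_of_le hw (min_le_right _ _)
    have hd1 : dist w.1 z.1 < 1 := lt_of_le_of_lt (by rw [Prod.dist_eq]; exact le_max_left _ _) hd
    have hd2 : dist w.2 z.2 < 1 := lt_of_le_of_lt (by rw [Prod.dist_eq]; exact le_max_right _ _) hd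
    rw [Real.dist_eq, abs_lt] at hd1 hd2
    have e1 : w.1 ≤ |z.1| + 1 := by have := le_abs_self z.1; linarith [hd1.2]
    have e2 : w.2 ≤ |z.2| + 1 := by have := le_abs_self z.2; linarith [hd2.2]
    have e3 : max w.1 w.2 ≤ max |z.1| |z.2| + 1 := by
      apply max_le
      · exact le_trans e1 (by have := le_max_left |z.1| |z.2|; linarith)
      · exact le_trans e2 (by have := le_max_right |z.1| |z.2|; linarith)
    linarith

lemma mem_AU_iff {r : ℕ} {x : ℝ} : x ∈ AU r ↔ ∃ p ∈ (req r).1, x ∈ iv p := by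
  simp [AU]

lemma ks_free (hk : 1 ≤ k) :
    ¬ ∃ f : Fin (k + 1) → ℝ, ∀ i j, i ≠ j → (f i, f j) ∈ EE k := by
  classical
  rintro ⟨f, hf⟩
  have adj : ∀ i j, i ≠ j → ∃ r, qual k r ∧ ∃ p ∈ (req r).1,
      (f i ∈ iv p ∧ f j ∈ C r) ∨ (f i ∈ C r ∧ f j ∈ iv p) := by
    intro i j hij
    obtain ⟨r, hq, hs⟩ := (mem_EE_iff k).1 (hf i j hij)
    exact ⟨r, hq, mem_sqr_iff.1 hs⟩
  set D : Fin (k + 1) → Prop := fun i => ∃ r, f i ∈ C r with hD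
  set ρ : Fin (k + 1) → ℕ := fun i => if h : D i then h.choose else 0 with hρdef
  have hρ : ∀ i, D i → f i ∈ C (ρ i) := by
    intro i hi
    simp only [hρdef, dif_pos hi]
    exact hi.choose_spec
  set T : Finset (Fin (k + 1)) := Finset.univ.filter D with hT
  have h01 : (0 : Fin (k + 1)) ≠ 1 := by
    intro h
    have h' := congrArg Fin.val h
    rw [Fin.val_zero, Fin.val_one'] at h'
    rw [Nat.mod_eq_of_lt (by omega)] at h'
    omega
  have hTmem : ∀ i, D i → i ∈ T := fun i hi =>
    Finset.mem_filter.2 ⟨Finset.mem_univ _, hi⟩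
  have hTne : T.Nonempty := by
    obtain ⟨r, _, p, _, hcase⟩ := adj 0 1 h01
    rcases hcase with ⟨_, h2⟩ | ⟨h1, _⟩
    · exact ⟨1, hTmem 1 ⟨r, h2⟩⟩
    · exact ⟨0, hTmem 0 ⟨r, h1⟩⟩
  obtain ⟨i₀, hi₀T, hmax⟩ := T.exists_max_image ρ hTne
  have hi₀D : D i₀ := (Finset.mem_filter.1 hi₀T).2
  set rs : ℕ := ρ i₀ with hrs
  have hfi₀ : f i₀ ∈ C rs := hρ i₀ hi₀D
  have stepA : ∀ j, j ≠ i₀ → f j ∈ AU rs ∧ qual k rs := by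
    intro j hj
    obtain ⟨r'', hq, p, hp, hcase⟩ := adj j i₀ hj
    rcases hcase with ⟨h1, h2⟩ | ⟨h1, h2⟩
    · have he : r'' = rs := C_unique h2 hfi₀
      subst he
      exact ⟨mem_AU_iff.2 ⟨p, hp, h1⟩, hq⟩
    · exfalso
      have hjD : D j := ⟨r'', h1⟩
      have he : ρ j = r'' := C_unique (hρ j hjD) h1
      have hle : r'' ≤ rs := he ▸ hmax j (hTmem j hjD)
      exact notin_iv_of_mem_C hfi₀ hle hp h2
  have hexj : ∃ j, j ≠ i₀ := by
    rcases eq_or_ne i₀ 0 with h | h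
    · exact ⟨1, by rw [h]; exact h01.symm⟩
    · exact ⟨0, h.symm⟩
  have hqual : qual k rs := by
    obtain ⟨j, hj⟩ := hexj
    exact (stepA j hj).2
  have stepB : ∀ j j', j ≠ i₀ → j' ≠ i₀ → j ≠ j' → (f j, f j') ∈ Estage k rs := by
    intro j j' hj hj' hjj'
    obtain ⟨r'', hq, p, hp, hcase⟩ := adj j j' hjj'
    have hlt : r'' < rs := by
      rcases hcase with ⟨h1, h2⟩ | ⟨h1, h2⟩
      · have hj'D : D j' := ⟨r'', h2⟩
        have he : ρ j' = r'' := C_unique (hρ j' hj'D) h2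
        have hle : r'' ≤ rs := he ▸ hmax j' (hTmem j' hj'D)
        rcases lt_or_eq_of_le hle with h | h
        · exact h
        · exfalso
          subst h
          obtain ⟨hAU, -⟩ := stepA j' hj'
          obtain ⟨p', hp', hfp'⟩ := mem_AU_iff.1 hAU
          exact notin_iv_of_mem_C h2 le_rfl hp' hfp'
      · have hjD : D j := ⟨r'', h1⟩
        have he : ρ j = r'' := C_unique (hρ j hjD) h1
        have hle : r'' ≤ rs := he ▸ hmax j (hTmem j hjD)
        rcases lt_or_eq_of_le hle with h | h
        · exact h
        · exfalso
          subst h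
          obtain ⟨hAU, -⟩ := stepA j hj
          obtain ⟨p', hp', hfp'⟩ := mem_AU_iff.1 hAU
          exact notin_iv_of_mem_C h1 le_rfl hp' hfp'
    have hmem : (f j, f j') ∈ Sq k r'' := ⟨hq, mem_sqr_iff.2 ⟨p, hp, hcase⟩⟩
    exact Estage_mono k (by omega : r'' + 1 ≤ rs) (Sq_subset_Estage k r'' hmem)
  apply hqual
  refine ⟨fun m => f (i₀.succAbove m), fun m => (stepA _ (Fin.succAbove_ne i₀ m)).1, ?_⟩
  intro m m' hmm'
  exact stepB _ _ (Fin.succAbove_ne i₀ m) (Fin.succAbove_ne i₀ m')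
    (fun h => hmm' (Fin.succAbove_right_injective h))

lemma noClique_mono {G G' : Set (ℝ × ℝ)} {S S' : Set ℝ} (hG : G ⊆ G') (hS : S ⊆ S')
    (h : noClique k G' S') : noClique k G S := by
  rintro ⟨g, hg1, hg2⟩
  exact h ⟨g, fun i => hS (hg1 i), fun i j hij => hG (hg2 i j hij)⟩

lemma exists_good_scale (U : Finset ℝ)
    (hU : ¬ ∃ f : Fin k → ℝ, Function.Injective f ∧ (∀ i, f i ∈ U) ∧
      ∀ i j, i ≠ j → (f i, f j) ∈ EE k) :
    ∃ n : ℕ, noClique k (EE k) (⋃ u ∈ U, Metric.ball u (1/((n:ℝ)+1))) := by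
  classical
  by_contra hcon
  push_neg at hcon
  have hcon' : ∀ n : ℕ, ∃ g : Fin k → ℝ,
      (∀ i, g i ∈ ⋃ u ∈ U, Metric.ball u (1/((n:ℝ)+1))) ∧
      ∀ i j, i ≠ j → (g i, g j) ∈ EE k := by
    intro n
    exact not_not.1 (hcon n)
  choose g hg1 hg2 using hcon'
  have hv : ∀ (n : ℕ) (i : Fin k), ∃ u : ℝ, u ∈ U ∧ |g n i - u| < 1/((n:ℝ)+1) := by
    intro n i
    have h := hg1 n i
    simp only [mem_iUnion, Metric.mem_ball, exists_prop, Real.dist_eq] at h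
    exact h
  choose v hv1 hv2 using hv
  set φ : ℕ → (Fin k → {x // x ∈ U}) := fun n i => ⟨v n i, hv1 n i⟩ with hφ
  obtain ⟨y, hy⟩ := Finite.exists_infinite_fiber φ
  have hyInf : (φ ⁻¹' {y}).Infinite := Set.infinite_coe_iff.1 hy
  have key : ∀ i j : Fin k, i ≠ j → ((y i : ℝ), (y j : ℝ)) ∈ EE k := by
    intro i j hij
    have hcl : ((y i : ℝ), (y j : ℝ)) ∈ closure (EE k) := by
      rw [Metric.mem_closure_iff]
      intro ε hε
      obtain ⟨n, hnS, hn⟩ := hyInf.exists_gt ⌈1/ε⌉₊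
      have hφn : φ n = y := hnS
      have hvy : ∀ m : Fin k, v n m = (y m : ℝ) := by
        intro m
        have := congrFun hφn m
        exact congrArg Subtype.val this
      have hdist : (1:ℝ)/((n:ℝ)+1) < ε := by
        have h1 : (1:ℝ)/ε ≤ ⌈1/ε⌉₊ := Nat.le_ceil _
        have h2 : ((⌈1/ε⌉₊ : ℝ)) < (n:ℝ) := by exact_mod_cast hn
        have h3 : (0:ℝ) < (n:ℝ) + 1 := by positivity
        rw [div_lt_iff₀ h3]
        have h4 : (1:ℝ) < ε * ((⌈1/ε⌉₊:ℝ) + 1) := by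
          have := (div_le_iff₀ hε).1 h1
          nlinarith
        nlinarith
      refine ⟨(g n i, g n j), hg2 n i j hij, ?_⟩
      rw [Prod.dist_eq]
      apply max_lt
      · rw [Real.dist_eq, ← hvy i, abs_sub_comm]
        exact lt_trans (hv2 n i) hdist
      · rw [Real.dist_eq, ← hvy j, abs_sub_comm]
        exact lt_trans (hv2 n j) hdist
    rwa [(EE_closed k).closure_eq] at hcl
  apply hU
  refine ⟨fun i => (y i : ℝ), ?_, fun i => (y i).2, key⟩
  intro i j hij
  by_contra hne
  have h := key i j hne
  rw [show ((y i : ℝ)) = (y j : ℝ) from hij] at h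
  exact EE_offdiag k _ h

lemma extension (hk : 3 ≤ k) (U W : Finset ℝ) (hUW : Disjoint U W)
    (hU : ¬ ∃ f : Fin k → ℝ, Function.Injective f ∧ (∀ i, f i ∈ U) ∧
      ∀ i j, i ≠ j → (f i, f j) ∈ EE k) :
    (interior {c : ℝ | (∀ u ∈ U, (u, c) ∈ EE k) ∧ ∀ w ∈ W, (w, c) ∉ EE k}).Nonempty := by
  classical
  obtain ⟨n, hn⟩ := exists_good_scale k U hU
  have hchoice : ∀ u : ℝ, ∃ p : ℚ × ℚ, u ∈ U →
      (u ∈ iv p ∧ iv p ⊆ Metric.ball u (1/((n:ℝ)+1)) ∧ ∀ w ∈ W, w ∉ iv p) := by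
    intro u
    by_cases hu : u ∈ U
    swap
    · exact ⟨(0, 0), fun h => absurd h hu⟩
    obtain ⟨η, hη0, hη1, hηW⟩ : ∃ η : ℝ, 0 < η ∧ η ≤ 1/((n:ℝ)+1) ∧
        ∀ w ∈ W, ¬ |u - w| < η := by
      rcases W.eq_empty_or_nonempty with rfl | hW
      · exact ⟨1/((n:ℝ)+1), by positivity, le_refl _, by simp⟩
      · refine ⟨min (1/((n:ℝ)+1)) (W.inf' hW fun w => |u - w|), ?_, min_le_left _ _, ?_⟩
        · apply lt_min (by positivity)
          rw [Finset.lt_inf'_iff]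
          intro w hw
          have hne : u ≠ w := fun h => (Finset.disjoint_left.1 hUW hu) (h ▸ hw)
          exact abs_pos.2 (sub_ne_zero.2 hne)
        · intro w hw hlt
          have h1 : (W.inf' hW fun w => |u - w|) ≤ |u - w| :=
            Finset.inf'_le _ hw
          have h2 : min (1/((n:ℝ)+1)) (W.inf' hW fun w => |u - w|) ≤
              (W.inf' hW fun w => |u - w|) := min_le_right _ _
          linarith
    obtain ⟨q1, hq1, hq1'⟩ := exists_rat_btwn (show u - η < u by linarith)
    obtain ⟨q2, hq2, hq2'⟩ := exists_rat_btwn (show u < u + η by linarith)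
    refine ⟨(q1, q2), fun _ => ⟨⟨le_of_lt hq1', le_of_lt hq2⟩, ?_, ?_⟩⟩
    · intro x hx
      obtain ⟨ha, hb⟩ := hx
      simp only [Metric.mem_ball, Real.dist_eq]
      have : |x - u| < η := abs_lt.2 ⟨by simp only at ha hb; linarith, by simp only at ha hb; linarith⟩
      linarith
    · intro w hw hwiv
      obtain ⟨ha, hb⟩ := hwiv
      exact hηW w hw (abs_lt.2 ⟨by simp only at ha hb; linarith, by simp only at ha hb; linarith⟩)
  choose P hP using hchoice
  set A : Finset (ℚ × ℚ) := U.image P with hA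
  obtain ⟨q, hq⟩ := exists_rat_gt (∑ w ∈ W, |w|)
  have hqW : ∀ w ∈ W, |w| ≤ (q:ℝ) := by
    intro w hw
    have h1 : |w| ≤ ∑ w ∈ W, |w| :=
      Finset.single_le_sum (f := fun w : ℝ => |w|) (fun _ _ => abs_nonneg _) hw
    linarith
  set r : ℕ := req.symm (A, q) with hr
  have hreq : req r = (A, q) := Equiv.apply_symm_apply _ _
  have hAUsub : AU r ⊆ ⋃ u ∈ U, Metric.ball u (1/((n:ℝ)+1)) := by
    intro x hx
    obtain ⟨p, hp, hxp⟩ := mem_AU_iff.1 hx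
    rw [hreq] at hp
    obtain ⟨u, hu, hup⟩ := Finset.mem_image.1 hp
    simp only [mem_iUnion, exists_prop]
    exact ⟨u, hu, (hP u hu).2.1 (hup ▸ hxp)⟩
  have hqual : qual k r := noClique_mono k (Estage_subset_EE k r) hAUsub hn
  have hsub : Ioo (t r) (t r + 1/2) ⊆
      {c : ℝ | (∀ u ∈ U, (u, c) ∈ EE k) ∧ ∀ w ∈ W, (w, c) ∉ EE k} := by
    intro c hc
    have hcC : c ∈ C r := Ioo_subset_Icc_self hc
    constructor
    · intro u hu
      refine Sq_subset_EE k r ⟨hqual, mem_sqr_iff.2 ⟨P u, ?_, Or.inl ⟨(hP u hu).1, hcC⟩⟩⟩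
      rw [hreq]
      exact Finset.mem_image_of_mem P hu
    · intro w hw hwc
      obtain ⟨r'', hq'', hs''⟩ := (mem_EE_iff k).1 hwc
      obtain ⟨p, hp, hcase⟩ := mem_sqr_iff.1 hs''
      rcases hcase with ⟨h1, h2⟩ | ⟨h1, h2⟩
      · have he : r'' = r := C_unique h2 hcC
        subst he
        rw [hreq] at hp
        obtain ⟨u, hu, hup⟩ := Finset.mem_image.1 hp
        exact (hP u hu).2.2 w hw (hup ▸ h1)
      · rcases le_or_gt r'' r with hle | hlt
        · exact notin_iv_of_mem_C hcC hle hp h2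
        · have hw1 := mem_C_lower h1
          have hw2 : |w| ≤ (q:ℝ) := hqW w hw
          have hw3 : (q:ℝ) ≤ reqBound (req r) := by
            rw [hreq]
            unfold reqBound
            have hs : (0:ℝ) ≤ ∑ p ∈ A, (|(p.1 : ℝ)| + |(p.2 : ℝ)|) :=
              Finset.sum_nonneg fun p _ => by positivity
            have := le_abs_self (q:ℝ)
            simp only
            linarith
          have hw4 : reqBound (req r) ≤ M r'' := reqBound_le_M hlt.le
          have hw5 := le_abs_self w
          linarith
  refine ⟨t r + 1/4, interior_maximal hsub isOpen_Ioo ⟨by linarith, by linarith⟩⟩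

lemma interior_EE_nonempty (hk : 2 ≤ k) : (interior (EE k)).Nonempty := by
  classical
  set R : Req := ({((0:ℚ), (1:ℚ))}, 0) with hR
  set r : ℕ := req.symm R with hr
  have hreq : req r = R := Equiv.apply_symm_apply _ _
  have hAU : AU r = Icc (0:ℝ) 1 := by
    rw [AU, hreq]
    simp [hR, iv]
  have hqual : qual k r := by
    rintro ⟨g, hg1, hg2⟩
    have h01 : (⟨0, by omega⟩ : Fin k) ≠ ⟨1, by omega⟩ := by
      intro h
      have := congrArg Fin.val h
      simp at this
    have hE : (g ⟨0, by omega⟩, g ⟨1, by omega⟩) ∈ EE k :=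
      Estage_subset_EE k r (hg2 _ _ h01)
    obtain ⟨r'', hq'', hs''⟩ := (mem_EE_iff k).1 hE
    obtain ⟨p, hp, hcase⟩ := mem_sqr_iff.1 hs''
    have hIcc : ∀ m : Fin k, g m ∈ Icc (0:ℝ) 1 := by
      intro m
      have := hg1 m
      rwa [hAU] at this
    rcases hcase with ⟨-, h2⟩ | ⟨h1, -⟩
    · have := mem_C_lower h2
      have h2' := (hIcc ⟨1, by omega⟩).2
      have := M_nonneg r''
      linarith
    · have := mem_C_lower h1
      have h2' := (hIcc ⟨0, by omega⟩).2
      have := M_nonneg r''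
      linarith
  have hsq : (Ioo (0:ℝ) 1) ×ˢ (Ioo (t r) (t r + 1/2)) ⊆ EE k := by
    rintro ⟨x, y⟩ ⟨hx, hy⟩
    refine Sq_subset_EE k r ⟨hqual, mem_sqr_iff.2 ⟨((0:ℚ), (1:ℚ)), ?_, Or.inl ⟨?_, ?_⟩⟩⟩
    · rw [hreq]; simp [hR]
    · simp only [iv, Rat.cast_zero, Rat.cast_one]
      exact ⟨le_of_lt hx.1, le_of_lt hx.2⟩
    · exact Ioo_subset_Icc_self hy
  refine ⟨(1/2, t r + 1/4), interior_maximal hsq (isOpen_Ioo.prod isOpen_Ioo) ?_⟩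
  refine ⟨⟨by norm_num, by norm_num⟩, ⟨by linarith, by linarith⟩⟩

end

end TUG


theorem exists_topologically_universal_ks_free_graph_on_real (s : ℕ) (hs : 3 < s) :
    ∃ E : Set (ℝ × ℝ), IsClosed E ∧ (interior E).Nonempty ∧
      (∀ x y : ℝ, (x, y) ∈ E → (y, x) ∈ E) ∧ (∀ x : ℝ, (x, x) ∉ E) ∧
      (¬ ∃ f : Fin s → ℝ, ∀ i j, i ≠ j → (f i, f j) ∈ E) ∧
      ∀ U W : Finset ℝ, Disjoint U W →
        (¬ ∃ f : Fin (s - 1) → ℝ, Function.Injective f ∧ (∀ i, f i ∈ U) ∧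
          ∀ i j, i ≠ j → (f i, f j) ∈ E) →
        (interior {c : ℝ | (∀ u ∈ U, (u, c) ∈ E) ∧ ∀ w ∈ W, (w, c) ∉ E}).Nonempty := by
  obtain ⟨k, rfl⟩ : ∃ k, s = k + 1 := ⟨s - 1, by omega⟩
  have hk : 3 ≤ k := by omega
  refine ⟨TUG.EE k, TUG.EE_closed k, TUG.interior_EE_nonempty k (by omega),
    fun x y h => TUG.EE_symm k h, TUG.EE_offdiag k, TUG.ks_free k (by omega), ?_⟩
  intro U W hUW hU
  exact TUG.extension k hk U W hUW hU
end
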